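/- arXiv:2305.04340 — 6 statements merged into one kernel-verified Lean document; each statement's English description precedes it below -/
import Mathlib

section
/- Let $\boldsymbol{M}$ be a positive definite $d\times d$ matrix with eigenvalues $\lambda_1 \ge \cdots \ge \lambda_d > 0$, and let $\boldsymbol{A}, \boldsymbol{B}, \boldsymbol{E}, \boldsymbol{F}$ be matrices with orthonormal columns of compatible sizes (each satisfying $\boldsymbol{X}^\top\boldsymbol{X} = I_d$). Then $\frac{\lambda_d}{2}\|\boldsymbol{A}\boldsymbol{B}^\top - \boldsymbol{E}\boldsymbol{F}^\top\|_F^2 \le \langle \boldsymbol{A}\boldsymbol{M}\boldsymbol{B}^\top,\ \boldsymbol{A}\boldsymbol{B}^\top - \boldsymbol{E}\boldsymbol{F}^\top\rangle \le \frac{\lambda_1}{2}\|\boldsymbol{A}\boldsymbol{B}^\top - \boldsymbol{E}\boldsymbol{F}^\top\|_F^2$. -/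
open Matrix

/-- Frobenius norm of a real matrix: `√(Tr(Aᵀ A))`. -/
noncomputable def frobNorm {m n : Type*} [Fintype m] [Fintype n]
    (A : Matrix m n ℝ) : ℝ :=
  Real.sqrt ((Aᵀ * A).trace)

/-- Trace (Frobenius) inner product of two real matrices: `⟨X, Y⟩ = Tr(Xᵀ Y)`. -/
noncomputable def matInner {m n : Type*} [Fintype m] [Fintype n]
    (X Y : Matrix m n ℝ) : ℝ :=
  (Xᵀ * Y).trace

lemma psd_trace_nonneg' {n : Type*} [Fintype n] {P : Matrix n n ℝ} (hP : P.PosSemidef) :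
    0 ≤ P.trace := by
  exact hP.trace_nonneg

lemma shift_psd' {d : ℕ} {M : Matrix (Fin d) (Fin d) ℝ} (hM : M.IsHermitian) (c : ℝ)
    (h : ∀ i, c ≤ hM.eigenvalues i) : (M - c • 1).PosSemidef := by
  have hspec := hM.spectral_theorem
  simp only [Unitary.conjStarAlgAut_apply] at hspec
  set U : Matrix (Fin d) (Fin d) ℝ := (hM.eigenvectorUnitary : Matrix (Fin d) (Fin d) ℝ)
  have hU : U * star U = 1 := (Matrix.mem_unitaryGroup_iff).mp hM.eigenvectorUnitary.2
  have key : M - c • 1 = U * (diagonal (fun i => hM.eigenvalues i - c)) * star U := by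
    have : (diagonal (fun i => hM.eigenvalues i - c) : Matrix (Fin d) (Fin d) ℝ)
        = diagonal (RCLike.ofReal ∘ hM.eigenvalues) - c • 1 := by
      simp [diagonal_sub, Matrix.smul_one_eq_diagonal]
    rw [this, Matrix.mul_sub, Matrix.sub_mul, ← hspec]
    congr 1
    rw [Matrix.mul_smul, Matrix.mul_one, Matrix.smul_mul, hU]
  rw [key]
  have hd : PosSemidef (diagonal (fun i => hM.eigenvalues i - c)) :=
    PosSemidef.diagonal (fun i => sub_nonneg.2 (h i))
  simpa [Matrix.star_eq_conjTranspose] using hd.mul_mul_conjTranspose_same U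

lemma shift_psd'' {d : ℕ} {M : Matrix (Fin d) (Fin d) ℝ} (hM : M.IsHermitian) (c : ℝ)
    (h : ∀ i, hM.eigenvalues i ≤ c) : (c • 1 - M).PosSemidef := by
  have hspec := hM.spectral_theorem
  simp only [Unitary.conjStarAlgAut_apply] at hspec
  set U : Matrix (Fin d) (Fin d) ℝ := (hM.eigenvectorUnitary : Matrix (Fin d) (Fin d) ℝ)
  have hU : U * star U = 1 := (Matrix.mem_unitaryGroup_iff).mp hM.eigenvectorUnitary.2
  have key : c • 1 - M = U * (diagonal (fun i => c - hM.eigenvalues i)) * star U := by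
    have : (diagonal (fun i => c - hM.eigenvalues i) : Matrix (Fin d) (Fin d) ℝ)
        = c • 1 - diagonal (RCLike.ofReal ∘ hM.eigenvalues) := by
      simp [diagonal_sub, Matrix.smul_one_eq_diagonal]
    rw [this, Matrix.mul_sub, Matrix.sub_mul, ← hspec]
    congr 1
    rw [Matrix.mul_smul, Matrix.mul_one, Matrix.smul_mul, hU]
  rw [key]
  have hd : PosSemidef (diagonal (fun i => c - hM.eigenvalues i)) :=
    PosSemidef.diagonal (fun i => sub_nonneg.2 (h i))
  simpa [Matrix.star_eq_conjTranspose] using hd.mul_mul_conjTranspose_same U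

lemma key_id {d p q : ℕ} (P : Matrix (Fin d) (Fin d) ℝ) (hP : Pᵀ = P)
    (A E : Matrix (Fin p) (Fin d) ℝ) (B F : Matrix (Fin q) (Fin d) ℝ)
    (hA : Aᵀ * A = 1) (hB : Bᵀ * B = 1) (hE : Eᵀ * E = 1) (hF : Fᵀ * F = 1) :
    2 * matInner (A * P * Bᵀ) (A * Bᵀ - E * Fᵀ) =
      ((A - E * (Fᵀ * B)) * P * (A - E * (Fᵀ * B))ᵀ).trace
      + ((B - F * (Fᵀ * B)) * P * (B - F * (Fᵀ * B))ᵀ).trace := by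
  have hA' : ∀ {k : ℕ} (X : Matrix (Fin d) (Fin k) ℝ), Aᵀ * (A * X) = X := by
    intro k X; rw [← Matrix.mul_assoc, hA, Matrix.one_mul]
  have hE' : ∀ {k : ℕ} (X : Matrix (Fin d) (Fin k) ℝ), Eᵀ * (E * X) = X := by
    intro k X; rw [← Matrix.mul_assoc, hE, Matrix.one_mul]
  have hF' : ∀ {k : ℕ} (X : Matrix (Fin d) (Fin k) ℝ), Fᵀ * (F * X) = X := by
    intro k X; rw [← Matrix.mul_assoc, hF, Matrix.one_mul]
  have hB' : ∀ {k : ℕ} (X : Matrix (Fin d) (Fin k) ℝ), Bᵀ * (B * X) = X := by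
    intro k X; rw [← Matrix.mul_assoc, hB, Matrix.one_mul]
  simp only [matInner, transpose_mul, transpose_sub, transpose_transpose,
    Matrix.mul_sub, Matrix.sub_mul, Matrix.trace_sub, Matrix.trace_add, Matrix.mul_assoc, hP]
  set c : ℝ := (P * (Aᵀ * (E * (Fᵀ * B)))).trace with hc
  set e : ℝ := (P * (Bᵀ * (F * (Fᵀ * B)))).trace with he
  have m1 : (B * (P * (Aᵀ * (A * Bᵀ)))).trace = P.trace := by
    rw [Matrix.trace_mul_comm]
    simp only [Matrix.mul_assoc, hA', hB', hA, hB, Matrix.mul_one]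
  have m2 : (B * (P * (Aᵀ * (E * Fᵀ)))).trace = c := by
    rw [Matrix.trace_mul_comm]
    simp only [Matrix.mul_assoc]; rfl
  have r1 : (A * (P * Aᵀ)).trace = P.trace := by
    rw [Matrix.trace_mul_comm]
    simp only [Matrix.mul_assoc, hA, Matrix.mul_one]
  have r2 : (E * (Fᵀ * (B * (P * Aᵀ)))).trace = c := by
    rw [Matrix.trace_mul_comm]; simp only [Matrix.mul_assoc]
    rw [Matrix.trace_mul_comm]; simp only [Matrix.mul_assoc]
    rw [Matrix.trace_mul_comm]; simp only [Matrix.mul_assoc]; rfl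
  have r3 : (A * (P * (Bᵀ * (F * Eᵀ)))).trace = c := by
    rw [← Matrix.trace_transpose]
    simp only [transpose_mul, transpose_transpose, hP, Matrix.mul_assoc]
    rw [Matrix.trace_mul_comm]; simp only [Matrix.mul_assoc]
    rw [Matrix.trace_mul_comm]; simp only [Matrix.mul_assoc]
    rw [Matrix.trace_mul_comm]; simp only [Matrix.mul_assoc]; rfl
  have r4 : (E * (Fᵀ * (B * (P * (Bᵀ * (F * Eᵀ)))))).trace = e := by
    rw [Matrix.trace_mul_comm]
    simp only [Matrix.mul_assoc, hE', hE, Matrix.mul_one]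
    rw [Matrix.trace_mul_comm]; simp only [Matrix.mul_assoc]
    rw [Matrix.trace_mul_comm]; simp only [Matrix.mul_assoc]; rfl
  have r5 : (B * (P * Bᵀ)).trace = P.trace := by
    rw [Matrix.trace_mul_comm]
    simp only [Matrix.mul_assoc, hB, Matrix.mul_one]
  have r6 : (F * (Fᵀ * (B * (P * Bᵀ)))).trace = e := by
    rw [Matrix.trace_mul_comm]; simp only [Matrix.mul_assoc]
    rw [Matrix.trace_mul_comm]; simp only [Matrix.mul_assoc]
    rw [Matrix.trace_mul_comm]; simp only [Matrix.mul_assoc]; rfl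
  have r7 : (B * (P * (Bᵀ * (F * Fᵀ)))).trace = e := by
    rw [Matrix.trace_mul_comm]; simp only [Matrix.mul_assoc]; rfl
  have r8 : (F * (Fᵀ * (B * (P * (Bᵀ * (F * Fᵀ)))))).trace = e := by
    rw [Matrix.trace_mul_comm]
    simp only [Matrix.mul_assoc, hF', hF, Matrix.mul_one]
    rw [Matrix.trace_mul_comm]; simp only [Matrix.mul_assoc]
    rw [Matrix.trace_mul_comm]; simp only [Matrix.mul_assoc]; rfl
  rw [m1, m2, r1, r2, r3, r4, r5, r6, r7, r8]
  ring

lemma key_nonneg {d p q : ℕ} (P : Matrix (Fin d) (Fin d) ℝ) (hP : P.PosSemidef)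
    (A E : Matrix (Fin p) (Fin d) ℝ) (B F : Matrix (Fin q) (Fin d) ℝ)
    (hA : Aᵀ * A = 1) (hB : Bᵀ * B = 1) (hE : Eᵀ * E = 1) (hF : Fᵀ * F = 1) :
    0 ≤ matInner (A * P * Bᵀ) (A * Bᵀ - E * Fᵀ) := by
  have hPt : Pᵀ = P := by
    rw [← P.conjTranspose_eq_transpose_of_trivial]; exact hP.1
  have h1 : 0 ≤ ((A - E * (Fᵀ * B)) * P * (A - E * (Fᵀ * B))ᵀ).trace := by
    apply psd_trace_nonneg'
    have := hP.mul_mul_conjTranspose_same (A - E * (Fᵀ * B))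
    rwa [Matrix.conjTranspose_eq_transpose_of_trivial] at this
  have h2 : 0 ≤ ((B - F * (Fᵀ * B)) * P * (B - F * (Fᵀ * B))ᵀ).trace := by
    apply psd_trace_nonneg'
    have := hP.mul_mul_conjTranspose_same (B - F * (Fᵀ * B))
    rwa [Matrix.conjTranspose_eq_transpose_of_trivial] at this
  have := key_id P hPt A E B F hA hB hE hF
  linarith

lemma norm_id {d p q : ℕ}
    (A E : Matrix (Fin p) (Fin d) ℝ) (B F : Matrix (Fin q) (Fin d) ℝ)
    (hA : Aᵀ * A = 1) (hB : Bᵀ * B = 1) (hE : Eᵀ * E = 1) (hF : Fᵀ * F = 1) :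
    ((A * Bᵀ - E * Fᵀ)ᵀ * (A * Bᵀ - E * Fᵀ)).trace =
      2 * matInner (A * Bᵀ) (A * Bᵀ - E * Fᵀ) := by
  have hA' : ∀ {k : ℕ} (X : Matrix (Fin d) (Fin k) ℝ), Aᵀ * (A * X) = X := by
    intro k X; rw [← Matrix.mul_assoc, hA, Matrix.one_mul]
  have hE' : ∀ {k : ℕ} (X : Matrix (Fin d) (Fin k) ℝ), Eᵀ * (E * X) = X := by
    intro k X; rw [← Matrix.mul_assoc, hE, Matrix.one_mul]
  have hB' : ∀ {k : ℕ} (X : Matrix (Fin d) (Fin k) ℝ), Bᵀ * (B * X) = X := by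
    intro k X; rw [← Matrix.mul_assoc, hB, Matrix.one_mul]
  simp only [matInner, transpose_mul, transpose_sub, transpose_transpose,
    Matrix.mul_sub, Matrix.sub_mul, Matrix.trace_sub, Matrix.trace_add, Matrix.mul_assoc]
  set c0 : ℝ := (Aᵀ * (E * (Fᵀ * B))).trace with hc0
  have n1 : (B * (Aᵀ * (A * Bᵀ))).trace = (1 : Matrix (Fin d) (Fin d) ℝ).trace := by
    rw [Matrix.trace_mul_comm]
    simp only [Matrix.mul_assoc, hA', hB', hA, hB, Matrix.mul_one]
  have n2 : (B * (Aᵀ * (E * Fᵀ))).trace = c0 := by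
    rw [Matrix.trace_mul_comm]; simp only [Matrix.mul_assoc]; rfl
  have n3 : (F * (Eᵀ * (A * Bᵀ))).trace = c0 := by
    rw [← Matrix.trace_transpose]
    simp only [transpose_mul, transpose_transpose, Matrix.mul_assoc]
    rw [Matrix.trace_mul_comm]; simp only [Matrix.mul_assoc]; rfl
  have n4 : (F * (Eᵀ * (E * Fᵀ))).trace = (1 : Matrix (Fin d) (Fin d) ℝ).trace := by
    simp only [hE']
    rw [Matrix.trace_mul_comm, hF]
  rw [n1, n2, n3, n4]
  ring

lemma matInner_sub_smul {m n : Type*} [Fintype m] [Fintype n]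
    (X Y Z : Matrix m n ℝ) (c : ℝ) :
    matInner (X - c • Y) Z = matInner X Z - c * matInner Y Z := by
  simp [matInner, transpose_sub, transpose_smul, Matrix.sub_mul, Matrix.smul_mul,
    Matrix.trace_sub, Matrix.trace_smul, smul_eq_mul]

lemma matInner_smul_sub {m n : Type*} [Fintype m] [Fintype n]
    (X Y Z : Matrix m n ℝ) (c : ℝ) :
    matInner (c • Y - X) Z = c * matInner Y Z - matInner X Z := by
  simp [matInner, transpose_sub, transpose_smul, Matrix.sub_mul, Matrix.smul_mul,
    Matrix.trace_sub, Matrix.trace_smul, smul_eq_mul]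

/-- for a positive definite `M` with smallest eigenvalue `λ_d` and
largest eigenvalue `λ₁`, and `A, B, E, F` with `d` orthonormal columns,
`(λ_d/2) ‖ABᵀ - EFᵀ‖_F² ≤ ⟨A M Bᵀ, ABᵀ - EFᵀ⟩ ≤ (λ₁/2) ‖ABᵀ - EFᵀ‖_F²`. -/
theorem inner_AMB_sandwich {d p q : ℕ}
    (M : Matrix (Fin d) (Fin d) ℝ) (hM : M.PosDef)
    (A E : Matrix (Fin p) (Fin d) ℝ) (B F : Matrix (Fin q) (Fin d) ℝ)
    (hA : Aᵀ * A = 1) (hB : Bᵀ * B = 1) (hE : Eᵀ * E = 1) (hF : Fᵀ * F = 1) :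
    (⨅ i, hM.1.eigenvalues i) / 2 * (frobNorm (A * Bᵀ - E * Fᵀ)) ^ 2 ≤
      matInner (A * M * Bᵀ) (A * Bᵀ - E * Fᵀ) ∧
    matInner (A * M * Bᵀ) (A * Bᵀ - E * Fᵀ) ≤
      (⨆ i, hM.1.eigenvalues i) / 2 * (frobNorm (A * Bᵀ - E * Fᵀ)) ^ 2 := by
  have htr0 : 0 ≤ ((A * Bᵀ - E * Fᵀ)ᵀ * (A * Bᵀ - E * Fᵀ)).trace := by
    apply psd_trace_nonneg'
    have := Matrix.posSemidef_conjTranspose_mul_self (A * Bᵀ - E * Fᵀ)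
    rwa [Matrix.conjTranspose_eq_transpose_of_trivial] at this
  have hfrob : (frobNorm (A * Bᵀ - E * Fᵀ)) ^ 2
      = ((A * Bᵀ - E * Fᵀ)ᵀ * (A * Bᵀ - E * Fᵀ)).trace := by
    rw [frobNorm, Real.sq_sqrt htr0]
  have hhalf : (frobNorm (A * Bᵀ - E * Fᵀ)) ^ 2
      = 2 * matInner (A * Bᵀ) (A * Bᵀ - E * Fᵀ) := by
    rw [hfrob, norm_id A E B F hA hB hE hF]
  have hminle : ∀ i, (⨅ j, hM.1.eigenvalues j) ≤ hM.1.eigenvalues i := fun i =>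
    ciInf_le (Finite.bddBelow_range _) i
  have hlemax : ∀ i, hM.1.eigenvalues i ≤ ⨆ j, hM.1.eigenvalues j := fun i =>
    le_ciSup (Finite.bddAbove_range _) i
  have hPmin : (M - (⨅ j, hM.1.eigenvalues j) • 1).PosSemidef :=
    shift_psd' hM.1 _ hminle
  have hPmax : ((⨆ j, hM.1.eigenvalues j) • 1 - M).PosSemidef :=
    shift_psd'' hM.1 _ hlemax
  have hmulmin : A * (M - (⨅ j, hM.1.eigenvalues j) • 1) * Bᵀ
      = A * M * Bᵀ - (⨅ j, hM.1.eigenvalues j) • (A * Bᵀ) := by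
    rw [Matrix.mul_sub, Matrix.sub_mul, Matrix.mul_smul, Matrix.mul_one, Matrix.smul_mul]
  have hmulmax : A * ((⨆ j, hM.1.eigenvalues j) • 1 - M) * Bᵀ
      = (⨆ j, hM.1.eigenvalues j) • (A * Bᵀ) - A * M * Bᵀ := by
    rw [Matrix.mul_sub, Matrix.sub_mul, Matrix.mul_smul, Matrix.mul_one, Matrix.smul_mul]
  have h1 := key_nonneg _ hPmin A E B F hA hB hE hF
  have h2 := key_nonneg _ hPmax A E B F hA hB hE hF
  rw [hmulmin, matInner_sub_smul] at h1
  rw [hmulmax, matInner_smul_sub] at h2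
  constructor
  · rw [hhalf]; ring_nf; ring_nf at h1; linarith
  · rw [hhalf]; ring_nf; ring_nf at h2; linarith
end

section
/- Let $\boldsymbol{Z}$ be a $d$-dimensional random vector, $Y$ a random element, and let $\{S_h : h = 1,\ldots,H\}$ be a measurable partition of the range of $Y$ such that $\mathbb{P}(Y \in S_h) \le (1+\gamma)/H$ for all $h$, for some $\gamma > 0$. Suppose that for some $\tau > 1+\gamma$ and all unit vectors $\boldsymbol{\beta} \in \mathbb{S}^{d-1}$, $\frac{1}{H}\sum_{h=1}^H \mathrm{var}(\boldsymbol{\beta}^\top \mathbb{E}[\boldsymbol{Z}\mid Y] \mid Y \in S_h) \le \frac{1}{\tau}\mathrm{var}(\boldsymbol{\beta}^\top \mathbb{E}[\boldsymbol{Z}\mid Y])$. Let $W = \sum_{h=1}^H h\, \mathbf{1}_{Y \in S_h}$. Then for all unit vectors $\boldsymbol{\beta}$, $(1 - \frac{1+\gamma}{\tau})\,\mathrm{var}(\boldsymbol{\beta}^\top \mathbb{E}[\boldsymbol{Z}\mid Y]) \le \mathrm{var}(\boldsymbol{\beta}^\top \mathbb{E}[\boldsymbol{Z}\mid W])$. 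-/
open MeasureTheory ProbabilityTheory
open scoped RealInnerProductSpace

private lemma variance_congr_ae {Ω : Type*} {_m : MeasurableSpace Ω} {μ : Measure Ω}
    {X Y : Ω → ℝ} (h : X =ᵐ[μ] Y) : variance X μ = variance Y μ := by
  unfold ProbabilityTheory.variance ProbabilityTheory.evariance
  rw [integral_congr_ae h]
  congr 1
  refine lintegral_congr_ae ?_
  filter_upwards [h] with ω hω
  rw [hω]

/-- discretization preserves most of the variance of the central curve.
If `{S h}` is a partition with `P(Y ∈ S h) ≤ (1+γ)/H` and the average sliced conditional
variance of `βᵀE[Z|Y]` is at most `(1/τ) var(βᵀE[Z|Y])` for all unit `β`, then, with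
`W = Σ_h h 1_{Y ∈ S h}`, one has
`(1 - (1+γ)/τ) var(βᵀE[Z|Y]) ≤ var(βᵀE[Z|W])` for all unit `β`. -/
theorem sliced_stability_discretization
    {Ω α : Type*} [MeasurableSpace Ω] [mα : MeasurableSpace α]
    (μ : Measure Ω) [IsProbabilityMeasure μ]
    {d H : ℕ} (hH : 0 < H)
    (Z : Ω → EuclideanSpace ℝ (Fin d)) (Y : Ω → α)
    (hY : Measurable Y) (hZ : Integrable Z μ)
    (S : Fin H → Set α) (hSmeas : ∀ h, MeasurableSet (S h))
    (hSdisj : Pairwise (Function.onFun Disjoint S))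
    (hScover : (⋃ h, S h) = Set.univ)
    (γ τ : ℝ) (hγ : 0 < γ) (hτ : 1 + γ < τ)
    (hslice : ∀ h, μ (Y ⁻¹' S h) ≤ ENNReal.ofReal ((1 + γ) / H))
    (W : Ω → ℕ)
    (hW : ∀ ω, (W ω : ℝ) = ∑ h : Fin H, (h : ℕ) * Set.indicator (S h) (fun _ => (1 : ℝ)) (Y ω))
    (hvar : ∀ β : EuclideanSpace ℝ (Fin d), ‖β‖ = 1 →
      (1 / H : ℝ) * ∑ h : Fin H,
          variance (fun ω => ⟪(μ[Z | MeasurableSpace.comap Y mα]) ω, β⟫)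
            (μ[|Y ⁻¹' S h]) ≤
        (1 / τ) *
          variance (fun ω => ⟪(μ[Z | MeasurableSpace.comap Y mα]) ω, β⟫) μ) :
    ∀ β : EuclideanSpace ℝ (Fin d), ‖β‖ = 1 →
      (1 - (1 + γ) / τ) *
          variance (fun ω => ⟪(μ[Z | MeasurableSpace.comap Y mα]) ω, β⟫) μ ≤
        variance (fun ω =>
          ⟪(μ[Z | MeasurableSpace.comap W inferInstance]) ω, β⟫) μ := by
  intro β hβ
  classical
  set f : Ω → ℝ := fun ω => ⟪(μ[Z | MeasurableSpace.comap Y mα]) ω, β⟫ with hf_def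
  set g : Ω → ℝ := fun ω => ⟪(μ[Z | MeasurableSpace.comap W inferInstance]) ω, β⟫ with hg_def
  have hmY : MeasurableSpace.comap Y mα ≤ ‹MeasurableSpace Ω› := hY.comap_le
  have hAmeas : ∀ h : Fin H, MeasurableSet (Y ⁻¹' S h) := fun h => hY (hSmeas h)
  have hAdisj : Pairwise (Function.onFun Disjoint fun h : Fin H => Y ⁻¹' S h) :=
    fun i j hij => Set.disjoint_left.mpr fun ω hωi hωj =>
      Set.disjoint_left.mp (hSdisj hij) hωi hωj
  have hAcover : (⋃ h : Fin H, Y ⁻¹' S h) = Set.univ := by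
    rw [← Set.preimage_iUnion, hScover, Set.preimage_univ]
  have hmem : ∀ ω, ∃ h : Fin H, Y ω ∈ S h := by
    intro ω
    have : Y ω ∈ ⋃ h, S h := hScover ▸ Set.mem_univ _
    simpa using this
  have hWval : ∀ (ω) (h : Fin H), Y ω ∈ S h → W ω = h := by
    intro ω h hh
    have h1 : (W ω : ℝ) = ((h : ℕ) : ℝ) := by
      rw [hW ω, Finset.sum_eq_single h]
      · rw [Set.indicator_of_mem hh]; ring
      · intro h' _ hne
        rw [Set.indicator_of_notMem, mul_zero]
        exact fun hmem' => Set.disjoint_left.mp (hSdisj hne) hmem' hh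
      · simp
    exact_mod_cast h1
  have hApre : ∀ h : Fin H, Y ⁻¹' S h = W ⁻¹' {(h : ℕ)} := by
    intro h; ext ω
    constructor
    · intro hω; exact hWval ω h hω
    · intro hω
      obtain ⟨h', hh'⟩ := hmem ω
      have hW' : W ω = (h' : ℕ) := hWval ω h' hh'
      have hval : (h' : ℕ) = (h : ℕ) := by rw [← hW']; exact hω
      have : h' = h := Fin.ext hval
      rw [← this]; exact hh'
  have hpre : ∀ t : Set ℕ,
      W ⁻¹' t = ⋃ h ∈ Finset.univ.filter (fun h : Fin H => (h : ℕ) ∈ t), Y ⁻¹' S h := by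
    intro t; ext ω
    simp only [Set.mem_iUnion, Finset.mem_filter, Finset.mem_univ, true_and, Set.mem_preimage]
    constructor
    · intro hω
      obtain ⟨h, hh⟩ := hmem ω
      exact ⟨h, by rw [← hWval ω h hh]; exact hω, hh⟩
    · rintro ⟨h, hht, hh⟩
      rw [hWval ω h hh]; exact hht
  have hm : MeasurableSpace.comap W inferInstance ≤ ‹MeasurableSpace Ω› := by
    rintro s ⟨t, -, rfl⟩
    rw [hpre t]
    exact (Finset.univ.filter fun h : Fin H => (h : ℕ) ∈ t).measurableSet_biUnion fun h _ => hAmeas h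
  set p : Fin H → ℝ := fun h => (μ (Y ⁻¹' S h)).toReal with hp_def
  set v : Fin H → EuclideanSpace ℝ (Fin d) :=
    fun h => (p h)⁻¹ • ∫ ω in Y ⁻¹' S h, Z ω ∂μ with hv_def
  set c : Fin H → ℝ := fun h => ⟪v h, β⟫ with hc_def
  have hvP : ∀ h : Fin H, (p h) • v h = ∫ ω in Y ⁻¹' S h, Z ω ∂μ := by
    intro h
    by_cases h0 : μ (Y ⁻¹' S h) = 0
    · have hr : μ.restrict (Y ⁻¹' S h) = 0 := Measure.restrict_eq_zero.mpr h0
      simp [hv_def, hp_def, h0, hr]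
    · have hp0 : p h ≠ 0 := ENNReal.toReal_ne_zero.mpr ⟨h0, measure_ne_top μ _⟩
      rw [hv_def]
      simp only []
      rw [smul_smul, mul_inv_cancel₀ hp0, one_smul]
  set stepZ : Ω → EuclideanSpace ℝ (Fin d) :=
    fun ω => ∑ h : Fin H, (Y ⁻¹' S h).indicator (fun _ => v h) ω with hstep_def
  have hstepInt : Integrable stepZ μ :=
    integrable_finset_sum _ fun h _ => (integrable_const (v h)).indicator (hAmeas h)
  have hstepA : ∀ h : Fin H, ∫ ω in Y ⁻¹' S h, stepZ ω ∂μ = ∫ ω in Y ⁻¹' S h, Z ω ∂μ := by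
    intro h
    rw [← hvP h]
    rw [hstep_def]
    rw [integral_finset_sum _ fun h' _ => ((integrable_const (v h')).indicator (hAmeas h')).integrableOn]
    rw [Finset.sum_eq_single h]
    · rw [setIntegral_indicator (hAmeas h), Set.inter_self, setIntegral_const]; rfl
    · intro h' _ hne
      rw [setIntegral_indicator (hAmeas h'),
        Set.disjoint_iff_inter_eq_empty.mp (hAdisj (Ne.symm hne)),
        Measure.restrict_empty, integral_zero_measure]
    · simp
  have hstepEq : stepZ =ᵐ[μ] μ[Z | MeasurableSpace.comap W inferInstance] := by
    refine ae_eq_condExp_of_forall_setIntegral_eq hm hZ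
      (fun s _ _ => hstepInt.integrableOn) ?_ ?_
    · rintro s ⟨t, -, rfl⟩ -
      rw [hpre t,
        integral_biUnion_finset _ (fun h _ => hAmeas h)
          ((hAdisj.set_pairwise _)) (fun h _ => hstepInt.integrableOn),
        integral_biUnion_finset _ (fun h _ => hAmeas h)
          ((hAdisj.set_pairwise _)) (fun h _ => hZ.integrableOn)]
      exact Finset.sum_congr rfl fun h _ => hstepA h
    · refine StronglyMeasurable.aestronglyMeasurable ?_
      refine Finset.stronglyMeasurable_fun_sum _ fun h _ => ?_
      refine StronglyMeasurable.indicator stronglyMeasurable_const ?_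
      exact ⟨{(h : ℕ)}, MeasurableSet.singleton _, (hApre h).symm⟩
  set sf : Ω → ℝ := fun ω => ∑ h : Fin H, (Y ⁻¹' S h).indicator (fun _ => c h) ω with hsf_def
  have hgs : g =ᵐ[μ] sf := by
    filter_upwards [hstepEq] with ω hω
    rw [hg_def]
    simp only []
    rw [← hω, hstep_def, hsf_def]
    simp only []
    rw [sum_inner]
    refine Finset.sum_congr rfl fun h _ => ?_
    by_cases hωh : ω ∈ Y ⁻¹' S h
    · rw [Set.indicator_of_mem hωh, Set.indicator_of_mem hωh]
    · rw [Set.indicator_of_notMem hωh, Set.indicator_of_notMem hωh, inner_zero_left]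
  -- f is a.e. strongly measurable
  have hfm : AEStronglyMeasurable f μ := by
    rw [hf_def]
    exact AEStronglyMeasurable.inner
      ((stronglyMeasurable_condExp.mono hmY).aestronglyMeasurable) aestronglyMeasurable_const
  by_cases hf2 : MemLp f 2 μ
  swap
  · have hzero : variance f μ = 0 := by
      unfold ProbabilityTheory.variance
      rw [evariance_eq_top hfm hf2]
      simp
    rw [hzero, mul_zero]
    exact variance_nonneg _ _
  -- main case
  have hfint : Integrable f μ := hf2.integrable one_le_two
  have hf2int : Integrable (fun ω => f ω ^ 2) μ := hf2.integrable_sq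
  have hintfA : ∀ h : Fin H, ∫ ω in Y ⁻¹' S h, f ω ∂μ = p h * c h := by
    intro h
    have h1 : ∫ ω in Y ⁻¹' S h, f ω ∂μ
        = ⟪∫ ω in Y ⁻¹' S h, (μ[Z | MeasurableSpace.comap Y mα]) ω ∂μ, β⟫ := by
      rw [hf_def]
      calc ∫ ω in Y ⁻¹' S h, ⟪(μ[Z | MeasurableSpace.comap Y mα]) ω, β⟫ ∂μ
          = ∫ ω in Y ⁻¹' S h, ⟪β, (μ[Z | MeasurableSpace.comap Y mα]) ω⟫ ∂μ := by
            simp_rw [real_inner_comm]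
        _ = ⟪β, ∫ ω in Y ⁻¹' S h, (μ[Z | MeasurableSpace.comap Y mα]) ω ∂μ⟫ :=
            integral_inner integrable_condExp.integrableOn β
        _ = ⟪∫ ω in Y ⁻¹' S h, (μ[Z | MeasurableSpace.comap Y mα]) ω ∂μ, β⟫ :=
            real_inner_comm _ _
    rw [h1, setIntegral_condExp hmY hZ ⟨S h, hSmeas h, rfl⟩, ← hvP h, real_inner_smul_left]
  have hcond_int : ∀ (q : Ω → ℝ) (h : Fin H),
      ∫ ω, q ω ∂(μ[|Y ⁻¹' S h]) = (p h)⁻¹ * ∫ ω in Y ⁻¹' S h, q ω ∂μ := by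
    intro q h
    rw [ProbabilityTheory.cond, integral_smul_measure, ENNReal.toReal_inv, smul_eq_mul]
  have hintf : ∫ ω, f ω ∂μ = ∑ h : Fin H, p h * c h := by
    rw [← setIntegral_univ, ← hAcover,
      integral_iUnion_fintype hAmeas hAdisj fun h => hfint.integrableOn]
    exact Finset.sum_congr rfl fun h _ => hintfA h
  have hintf2 : ∫ ω, f ω ^ 2 ∂μ = ∑ h : Fin H, ∫ ω in Y ⁻¹' S h, f ω ^ 2 ∂μ := by
    rw [← setIntegral_univ, ← hAcover,
      integral_iUnion_fintype hAmeas hAdisj fun h => hf2int.integrableOn]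
  have hsf_on : ∀ (h : Fin H) ω, ω ∈ Y ⁻¹' S h → sf ω = c h := by
    intro h ω hω
    rw [hsf_def]
    simp only []
    rw [Finset.sum_eq_single h]
    · rw [Set.indicator_of_mem hω]
    · intro h' _ hne
      exact Set.indicator_of_notMem
        (fun hmem' => Set.disjoint_left.mp (hAdisj hne) hmem' hω) _
    · simp
  have hsf2 : MemLp sf 2 μ := by
    rw [hsf_def]
    exact memLp_finset_sum _ fun h _ =>
      memLp_indicator_const 2 (hAmeas h) (c h) (Or.inr (measure_ne_top μ _))
  have hsfint : ∫ ω, sf ω ∂μ = ∑ h : Fin H, p h * c h := by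
    rw [← setIntegral_univ, ← hAcover,
      integral_iUnion_fintype hAmeas hAdisj fun h => (hsf2.integrable one_le_two).integrableOn]
    refine Finset.sum_congr rfl fun h _ => ?_
    rw [setIntegral_congr_fun (hAmeas h) (fun ω hω => hsf_on h ω hω), setIntegral_const,
      smul_eq_mul]; rfl
  have hsf2int : ∫ ω, sf ω ^ 2 ∂μ = ∑ h : Fin H, p h * c h ^ 2 := by
    rw [← setIntegral_univ, ← hAcover,
      integral_iUnion_fintype hAmeas hAdisj fun h => hsf2.integrable_sq.integrableOn]
    refine Finset.sum_congr rfl fun h _ => ?_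
    rw [setIntegral_congr_fun (hAmeas h)
      (fun ω hω => show sf ω ^ 2 = c h ^ 2 by rw [hsf_on h ω hω]),
      setIntegral_const, smul_eq_mul]; rfl
  have hvarsf : variance sf μ = (∑ h : Fin H, p h * c h ^ 2) - (∑ h : Fin H, p h * c h) ^ 2 := by
    rw [variance_eq_sub hsf2]
    have e1 : ∫ ω, (sf ^ 2) ω ∂μ = ∫ ω, sf ω ^ 2 ∂μ := rfl
    rw [e1, hsf2int, hsfint]
  have hvarf : variance f μ = (∫ ω, f ω ^ 2 ∂μ) - (∑ h : Fin H, p h * c h) ^ 2 := by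
    rw [variance_eq_sub hf2]
    have e1 : ∫ ω, (f ^ 2) ω ∂μ = ∫ ω, f ω ^ 2 ∂μ := rfl
    rw [e1, hintf]
  have hkey : ∀ h : Fin H, p h * variance f (μ[|Y ⁻¹' S h])
      = (∫ ω in Y ⁻¹' S h, f ω ^ 2 ∂μ) - p h * c h ^ 2 := by
    intro h
    by_cases h0 : μ (Y ⁻¹' S h) = 0
    · have hr : μ.restrict (Y ⁻¹' S h) = 0 := Measure.restrict_eq_zero.mpr h0
      have hμ0 : μ[|Y ⁻¹' S h] = 0 := by rw [ProbabilityTheory.cond, hr, smul_zero]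
      have hp0 : p h = 0 := by rw [hp_def]; simp [h0]
      have h1 : (∫ ω in Y ⁻¹' S h, f ω ^ 2 ∂μ) = 0 := by rw [hr, integral_zero_measure]
      rw [hμ0, hp0, h1]; ring
    · haveI := cond_isProbabilityMeasure (μ := μ) h0
      have hp0 : p h ≠ 0 := ENNReal.toReal_ne_zero.mpr ⟨h0, measure_ne_top μ _⟩
      have hf2h : MemLp f 2 (μ[|Y ⁻¹' S h]) := by
        rw [ProbabilityTheory.cond]
        exact (hf2.restrict _).smul_measure (ENNReal.inv_ne_top.mpr h0)
      rw [variance_eq_sub hf2h]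
      have e1 : ∫ ω, (f ^ 2) ω ∂(μ[|Y ⁻¹' S h]) = ∫ ω, f ω ^ 2 ∂(μ[|Y ⁻¹' S h]) := rfl
      rw [e1, hcond_int (fun ω => f ω ^ 2) h, hcond_int f h, hintfA h]
      field_simp
  have hsum : ∑ h : Fin H, p h * variance f (μ[|Y ⁻¹' S h])
      = (∫ ω, f ω ^ 2 ∂μ) - ∑ h : Fin H, p h * c h ^ 2 := by
    rw [Finset.sum_congr rfl fun h _ => hkey h, Finset.sum_sub_distrib, ← hintf2]
  have hp_le : ∀ h : Fin H, p h ≤ (1 + γ) / H := by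
    intro h
    have h1 : p h ≤ (ENNReal.ofReal ((1 + γ) / H)).toReal :=
      ENNReal.toReal_mono ENNReal.ofReal_ne_top (hslice h)
    rwa [ENNReal.toReal_ofReal (by positivity)] at h1
  have hbound : ∑ h : Fin H, p h * variance f (μ[|Y ⁻¹' S h])
      ≤ ((1 + γ) / τ) * variance f μ := by
    have hv := hvar β hβ
    rw [← hf_def] at hv
    calc ∑ h : Fin H, p h * variance f (μ[|Y ⁻¹' S h])
        ≤ ∑ h : Fin H, ((1 + γ) / H) * variance f (μ[|Y ⁻¹' S h]) :=
          Finset.sum_le_sum fun h _ =>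
            mul_le_mul_of_nonneg_right (hp_le h) (variance_nonneg _ _)
      _ = (1 + γ) * ((1 / H : ℝ) * ∑ h : Fin H, variance f (μ[|Y ⁻¹' S h])) := by
          rw [← Finset.mul_sum]; ring
      _ ≤ (1 + γ) * ((1 / τ) * variance f μ) :=
          mul_le_mul_of_nonneg_left hv (by linarith)
      _ = ((1 + γ) / τ) * variance f μ := by ring
  have hvg : variance g μ = variance sf μ := variance_congr_ae hgs
  rw [hvg]
  have : variance sf μ = variance f μ - ∑ h : Fin H, p h * variance f (μ[|Y ⁻¹' S h]) := by
    rw [hvarsf, hvarf, hsum]; ring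
  rw [this]
  nlinarith [variance_nonneg f μ, hbound]
end

section
/- Suppose the distribution of the random vector $\boldsymbol{Z} \in \mathbb{R}^d$ is invariant under orthogonal transformations, and $W$ is a discrete random variable on the same probability space. Then for any $w$ in the support of $W$ and any real number $\theta$, $\|\mathbb{E}[\boldsymbol{Z}\, \mathbf{1}_{W=w}]\| \le \theta\, \mathbb{P}(W=w) + \mathbb{E}[(Z_1 - \theta)_+]$, where $Z_1$ is the first coordinate of $\boldsymbol{Z}$ and $x_+ = \max(x,0)$. -/
open MeasureTheory Matrix
open scoped RealInnerProductSpace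

/-- if the law of `Z` is invariant under orthogonal transformations and
`W` is a discrete random variable, then for any `w` in the support of `W` and any `θ`,
`‖E[Z 1_{W=w}]‖ ≤ θ P(W=w) + E[(Z₁ - θ)₊]`. -/
theorem norm_integral_indicator_le_of_rotation_invariant
    {Ω : Type*} [MeasurableSpace Ω] (μ : Measure Ω) [IsProbabilityMeasure μ]
    {d : ℕ} (hd : 0 < d)
    (Z : Ω → EuclideanSpace ℝ (Fin d)) (hZmeas : Measurable Z)
    (hZint : Integrable Z μ)
    (hinv : ∀ V ∈ Matrix.orthogonalGroup (Fin d) ℝ,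
      Measure.map (fun ω => (WithLp.equiv 2 (Fin d → ℝ)).symm
        ((V : Matrix (Fin d) (Fin d) ℝ).mulVec (Z ω))) μ = Measure.map Z μ)
    (W : Ω → ℕ) (hWmeas : Measurable W) :
    ∀ w : ℕ, μ (W ⁻¹' {w}) ≠ 0 → ∀ θ : ℝ,
      ‖∫ ω in W ⁻¹' {w}, Z ω ∂μ‖ ≤
        θ * (μ (W ⁻¹' {w})).toReal + ∫ ω, max (Z ω ⟨0, hd⟩ - θ) 0 ∂μ := by
  intro w hw θ
  set s := W ⁻¹' {w} with hs
  have hsm : MeasurableSet s := hWmeas (measurableSet_singleton w)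
  set v := ∫ ω in s, Z ω ∂μ with hv
  -- a unit vector u with ⟪u, v⟫ = ‖v‖
  obtain ⟨u, hu1, huv⟩ : ∃ u : EuclideanSpace ℝ (Fin d), ‖u‖ = 1 ∧ ⟪u, v⟫ = ‖v‖ := by
    by_cases h : v = 0
    · refine ⟨EuclideanSpace.single ⟨0, hd⟩ (1 : ℝ), ?_, by simp [h]⟩
      simp [EuclideanSpace.norm_single]
    · refine ⟨‖v‖⁻¹ • v, ?_, ?_⟩
      · simp [norm_smul, inv_mul_cancel₀ (norm_ne_zero_iff.mpr h)]
      · rw [real_inner_smul_left, real_inner_self_eq_norm_sq]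
        field_simp [norm_ne_zero_iff.mpr h]
  -- extend u to an orthonormal basis
  have hcard : Module.finrank ℝ (EuclideanSpace ℝ (Fin d)) = Fintype.card (Fin d) := by
    simp
  have horth : Orthonormal ℝ (({⟨0, hd⟩} : Set (Fin d)).restrict
      (fun _ : Fin d => u)) := by
    constructor
    · intro i; exact hu1
    · intro i j hij
      exact absurd (Subtype.ext (i.2.trans j.2.symm)) hij
  obtain ⟨b, hb⟩ := horth.exists_orthonormalBasis_extension_of_card_eq hcard
  have hb0 : b ⟨0, hd⟩ = u := hb _ rfl
  -- the orthogonal matrix whose rows are the basis vectors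
  set V : Matrix (Fin d) (Fin d) ℝ := Matrix.of (fun i j => b i j) with hV
  have hVmem : V ∈ Matrix.orthogonalGroup (Fin d) ℝ := by
    rw [Matrix.mem_orthogonalGroup_iff]
    ext i k
    have := orthonormal_iff_ite.mp b.orthonormal i k
    simp only [PiLp.inner_apply, RCLike.inner_apply, conj_trivial] at this
    simp only [Matrix.mul_apply, Matrix.one_apply, Matrix.star_apply, hV, Matrix.of_apply,
      star_trivial]
    simpa [mul_comm] using this
  have hrow : ∀ x : EuclideanSpace ℝ (Fin d), V.mulVec x ⟨0, hd⟩ = ⟪u, x⟫ := by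
    intro x
    simp [Matrix.mulVec, dotProduct, hV, mul_comm, PiLp.inner_apply, RCLike.inner_apply, ← hb0]
  -- measurability
  have hcoord : ∀ i : Fin d, Measurable (fun ω => Z ω i) := fun i =>
    (measurable_pi_apply i).comp ((WithLp.measurable_ofLp _ _).comp hZmeas)
  have hTmeas : Measurable (fun ω => (WithLp.equiv 2 (Fin d → ℝ)).symm
      (V.mulVec (Z ω)) : Ω → EuclideanSpace ℝ (Fin d)) := by
    apply (WithLp.measurable_toLp _ _).comp
    apply measurable_pi_lambda
    intro i
    have : (fun ω => (WithLp.equiv 2 (Fin d → ℝ)).symm (V.mulVec (Z ω)) i)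
        = fun ω => ∑ j, V i j * Z ω j := by
      funext ω; rfl
    rw [show (fun ω => (V.mulVec (Z ω)) i) = fun ω => ∑ j, V i j * Z ω j from this]
    exact Finset.measurable_sum _ fun j _ => (hcoord j).const_mul _
  have hgmeas : Measurable (fun x : EuclideanSpace ℝ (Fin d) => max (x ⟨0, hd⟩ - θ) 0) := by
    exact (((measurable_pi_apply _).comp (WithLp.measurable_ofLp _ _)).sub measurable_const).max measurable_const
  -- transfer the integral via rotation invariance
  have key : ∫ ω, max (⟪u, Z ω⟫ - θ) 0 ∂μ = ∫ ω, max (Z ω ⟨0, hd⟩ - θ) 0 ∂μ := by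
    have h1 : ∫ ω, max (⟪u, Z ω⟫ - θ) 0 ∂μ
        = ∫ x, max (x ⟨0, hd⟩ - θ) 0 ∂(Measure.map (fun ω =>
            (WithLp.equiv 2 (Fin d → ℝ)).symm (V.mulVec (Z ω))) μ) := by
      rw [integral_map hTmeas.aemeasurable hgmeas.aestronglyMeasurable]
      congr 1; funext ω
      congr 1
      rw [← hrow (Z ω)]
      rfl
    have h2 : ∫ x, max (x ⟨0, hd⟩ - θ) 0 ∂(Measure.map Z μ)
        = ∫ ω, max (Z ω ⟨0, hd⟩ - θ) 0 ∂μ := by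
      rw [integral_map hZmeas.aemeasurable hgmeas.aestronglyMeasurable]
    rw [h1, hinv V hVmem, h2]
  -- integrability facts
  have hinner : Integrable (fun ω => ⟪u, Z ω⟫) μ := hZint.const_inner u
  have hpos : Integrable (fun ω => max (⟪u, Z ω⟫ - θ) 0) μ :=
    (hinner.sub (integrable_const θ)).pos_part
  -- the chain of inequalities
  have step1 : ‖v‖ = ∫ ω in s, ⟪u, Z ω⟫ ∂μ := by
    rw [← huv, hv, ← integral_inner hZint.restrict]
  have step2 : ∫ ω in s, ⟪u, Z ω⟫ ∂μ
      ≤ ∫ ω in s, (θ + max (⟪u, Z ω⟫ - θ) 0) ∂μ := by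
    apply integral_mono hinner.restrict
    · exact (integrable_const θ).add hpos.restrict
    · intro ω
      simp only
      have : ⟪u, Z ω⟫ - θ ≤ max (⟪u, Z ω⟫ - θ) 0 := le_max_left _ _
      linarith
  have step3 : ∫ ω in s, (θ + max (⟪u, Z ω⟫ - θ) 0) ∂μ
      = θ * (μ s).toReal + ∫ ω in s, max (⟪u, Z ω⟫ - θ) 0 ∂μ := by
    rw [integral_add (integrable_const θ) hpos.restrict, setIntegral_const, smul_eq_mul,
      mul_comm, measureReal_def]
  have step4 : ∫ ω in s, max (⟪u, Z ω⟫ - θ) 0 ∂μ ≤ ∫ ω, max (⟪u, Z ω⟫ - θ) 0 ∂μ := by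
    apply setIntegral_le_integral hpos
    filter_upwards with ω using le_max_right _ _
  calc ‖v‖ = ∫ ω in s, ⟪u, Z ω⟫ ∂μ := step1
    _ ≤ θ * (μ s).toReal + ∫ ω in s, max (⟪u, Z ω⟫ - θ) 0 ∂μ := by
        rw [← step3]; exact step2
    _ ≤ θ * (μ s).toReal + ∫ ω, max (⟪u, Z ω⟫ - θ) 0 ∂μ := by linarith
    _ = θ * (μ s).toReal + ∫ ω, max (Z ω ⟨0, hd⟩ - θ) 0 ∂μ := by rw [key]
end

section
/- If $Z \sim N(0,1)$ and $\theta > 0$, then $(\mathbb{E}[Z \mid Z > \theta])^2 \le 37 \log\frac{1}{\mathbb{P}(Z > \theta)}$. -/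
open MeasureTheory ProbabilityTheory Real Set Filter
open scoped ENNReal NNReal

noncomputable def gc : ℝ := (Real.sqrt (2*Real.pi))⁻¹

lemma gc_pos : 0 < gc := by rw [gc]; positivity

lemma gc_le_one : gc ≤ 1 := by
  rw [gc]
  rw [inv_le_one_iff₀]
  right
  rw [show (1:ℝ) = Real.sqrt 1 by simp]
  exact Real.sqrt_le_sqrt (by nlinarith [Real.pi_gt_three])

lemma gpdf_eq (x : ℝ) : gaussianPDFReal 0 1 x = gc * Real.exp (-x^2/2) := by
  simp [gaussianPDFReal, gc]

lemma intg_exp : Integrable (fun z : ℝ => gc * Real.exp (-z^2/2)) := by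
  have h := (integrable_exp_neg_mul_sq (b := (1/2:ℝ)) (by norm_num)).const_mul gc
  convert h using 2 with z
  ring_nf

lemma intg_mul_exp : Integrable (fun z : ℝ => z * (gc * Real.exp (-z^2/2))) := by
  have h := (integrable_mul_exp_neg_mul_sq (b := (1/2:ℝ)) (by norm_num)).const_mul gc
  convert h using 2 with z
  ring_nf

lemma exp_nonneg' (z : ℝ) : 0 ≤ gc * Real.exp (-z^2/2) :=
  mul_nonneg gc_pos.le (Real.exp_nonneg _)

lemma tendsto_exp_sq : Tendsto (fun z : ℝ => Real.exp (-z^2/2)) atTop (nhds 0) := by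
  have : Tendsto (fun z : ℝ => -z^2/2) atTop atBot := by
    apply Filter.Tendsto.atBot_div_const (by norm_num)
    exact tendsto_neg_atBot_iff.mpr (tendsto_pow_atTop (by norm_num))
  exact Real.tendsto_exp_atBot.comp this

-- FTC computation of the first moment tail integral
lemma integral_A (θ : ℝ) :
    ∫ z in Ioi θ, z * (gc * Real.exp (-z^2/2)) = gc * Real.exp (-θ^2/2) := by
  have hderiv : ∀ x ∈ Ici θ, HasDerivAt (fun z : ℝ => -(gc * Real.exp (-z^2/2)))
      (x * (gc * Real.exp (-x^2/2))) x := by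
    intro x _
    have h1 : HasDerivAt (fun z : ℝ => -z^2/2) (-x) x := by
      have := ((hasDerivAt_pow 2 x).neg).div_const 2
      simpa using this.congr_deriv (by ring)
    have h2 := (Real.hasDerivAt_exp (-x^2/2)).comp x h1
    have h3 := ((h2.const_mul gc).neg)
    refine h3.congr_deriv ?_
    ring
  have hint : IntegrableOn (fun z : ℝ => z * (gc * Real.exp (-z^2/2))) (Ioi θ) :=
    intg_mul_exp.integrableOn
  have htend : Tendsto (fun z : ℝ => -(gc * Real.exp (-z^2/2))) atTop (nhds 0) := by
    have := (tendsto_exp_sq.const_mul gc).neg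
    simpa using this
  have := integral_Ioi_of_hasDerivAt_of_tendsto' hderiv hint htend
  rw [this]; ring

noncomputable def gd (x : ℝ) : ℝ := gc * Real.exp (-x^2/2) * ((x^4+2*x^2-1)/((x^2+1)^2))

lemma gd_deriv (x : ℝ) :
    HasDerivAt (fun z : ℝ => -(gc * (z/(z^2+1) * Real.exp (-z^2/2)))) (gd x) x := by
  have hne : x^2+1 ≠ 0 := by positivity
  have h0 : HasDerivAt (fun z : ℝ => z^2+1) (2*x) x := by
    simpa using ((hasDerivAt_pow 2 x).add_const 1)
  have h1 : HasDerivAt (fun z : ℝ => z/(z^2+1)) ((1-x^2)/(x^2+1)^2) x := by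
    have := (hasDerivAt_id x).div h0 hne
    refine this.congr_deriv ?_
    simp only [id]
    ring
  have h2 : HasDerivAt (fun z : ℝ => Real.exp (-z^2/2)) (-x * Real.exp (-x^2/2)) x := by
    have ha : HasDerivAt (fun z : ℝ => -z^2/2) (-x) x := by
      have := ((hasDerivAt_pow 2 x).neg).div_const 2
      simpa using this.congr_deriv (by ring)
    have := (Real.hasDerivAt_exp (-x^2/2)).comp x ha
    exact this.congr_deriv (by ring)
  have h3 := ((h1.mul h2).const_mul gc).neg
  refine h3.congr_deriv ?_
  rw [gd]
  field_simp
  ring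

lemma gd_abs_le (x : ℝ) : ‖gd x‖ ≤ ‖gc * Real.exp (-x^2/2)‖ := by
  rw [gd, norm_mul]
  have h1 : ‖(x^4+2*x^2-1)/((x^2+1)^2)‖ ≤ 1 := by
    rw [Real.norm_eq_abs, abs_div, abs_of_nonneg (by positivity : (0:ℝ) ≤ (x^2+1)^2),
      div_le_one (by positivity), abs_le]
    constructor <;> nlinarith [sq_nonneg x, sq_nonneg (x^2)]
  calc ‖gc * Real.exp (-x^2/2)‖ * ‖(x^4+2*x^2-1)/((x^2+1)^2)‖
      ≤ ‖gc * Real.exp (-x^2/2)‖ * 1 := mul_le_mul_of_nonneg_left h1 (norm_nonneg _)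
    _ = ‖gc * Real.exp (-x^2/2)‖ := mul_one _

lemma gd_integrable : Integrable gd := by
  refine intg_exp.mono ?_ (Filter.Eventually.of_forall gd_abs_le)
  apply Continuous.aestronglyMeasurable
  unfold gd
  fun_prop (disch := intro x; positivity)

lemma tendsto_frac : Tendsto (fun z : ℝ => z/(z^2+1)) atTop (nhds 0) := by
  apply squeeze_zero' (g := fun z : ℝ => 1/z)
  · filter_upwards [eventually_gt_atTop (0:ℝ)] with z hz
    positivity
  · filter_upwards [eventually_ge_atTop (1:ℝ)] with z hz
    rw [div_le_div_iff₀ (by positivity) (by linarith)]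
    nlinarith
  · simpa [one_div] using tendsto_inv_atTop_zero

-- lower tail bound
lemma integral_B (θ : ℝ) :
    gc * (θ/(θ^2+1)) * Real.exp (-θ^2/2) ≤ ∫ z in Ioi θ, gc * Real.exp (-z^2/2) := by
  have htend : Tendsto (fun z : ℝ => -(gc * (z/(z^2+1) * Real.exp (-z^2/2)))) atTop (nhds 0) := by
    have := ((tendsto_frac.mul tendsto_exp_sq).const_mul gc).neg
    simpa using this
  have hftc := integral_Ioi_of_hasDerivAt_of_tendsto' (a := θ)
    (fun x _ => gd_deriv x) gd_integrable.integrableOn htend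
  have hmono : ∫ z in Ioi θ, gd z ≤ ∫ z in Ioi θ, gc * Real.exp (-z^2/2) := by
    apply setIntegral_mono gd_integrable.integrableOn intg_exp.integrableOn
    intro x
    calc gd x ≤ ‖gd x‖ := le_norm_self _
      _ ≤ ‖gc * Real.exp (-x^2/2)‖ := gd_abs_le x
      _ = gc * Real.exp (-x^2/2) := by
          rw [Real.norm_eq_abs, abs_of_nonneg (exp_nonneg' x)]
  calc gc * (θ/(θ^2+1)) * Real.exp (-θ^2/2) = ∫ z in Ioi θ, gd z := by rw [hftc]; ring
    _ ≤ _ := hmono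

-- upper tail bound
lemma integral_C {θ : ℝ} (hθ : 0 < θ) :
    ∫ z in Ioi θ, gc * Real.exp (-z^2/2) ≤ (1/θ) * (gc * Real.exp (-θ^2/2)) := by
  have hmono : ∫ z in Ioi θ, gc * Real.exp (-z^2/2)
      ≤ ∫ z in Ioi θ, (1/θ) * (z * (gc * Real.exp (-z^2/2))) := by
    apply setIntegral_mono_on intg_exp.integrableOn
      ((intg_mul_exp.const_mul (1/θ)).integrableOn) measurableSet_Ioi
    intro x hx
    rw [Set.mem_Ioi] at hx
    have h1 : (1:ℝ) ≤ x/θ := (one_le_div hθ).mpr hx.le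
    have := mul_le_mul_of_nonneg_right h1 (exp_nonneg' x)
    calc gc * Real.exp (-x^2/2) = 1 * (gc * Real.exp (-x^2/2)) := (one_mul _).symm
      _ ≤ (x/θ) * (gc * Real.exp (-x^2/2)) := this
      _ = (1/θ) * (x * (gc * Real.exp (-x^2/2))) := by ring
  refine le_trans hmono (le_of_eq ?_)
  rw [integral_const_mul, integral_A]

-- tail monotone in θ
lemma integral_mono_tail {a b : ℝ} (hab : a ≤ b) :
    ∫ z in Ioi b, gc * Real.exp (-z^2/2) ≤ ∫ z in Ioi a, gc * Real.exp (-z^2/2) := by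
  apply setIntegral_mono_set intg_exp.integrableOn
    (Filter.Eventually.of_forall exp_nonneg')
  exact Filter.Eventually.of_forall (Ioi_subset_Ioi hab)

-- half-line integral at 0 is 1/2
lemma integral_zero_half : ∫ z in Ioi (0:ℝ), gc * Real.exp (-z^2/2) = 1/2 := by
  have h : ∫ z in Ioi (0:ℝ), Real.exp (-(1/2:ℝ) * z^2) = Real.sqrt (Real.pi/(1/2)) / 2 :=
    integral_gaussian_Ioi (1/2)
  have heq : ∀ z : ℝ, gc * Real.exp (-z^2/2) = gc * Real.exp (-(1/2:ℝ) * z^2) := by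
    intro z; ring_nf
  rw [integral_congr_ae (Filter.Eventually.of_forall fun z => heq z)]
  rw [integral_const_mul, h]
  have : Real.pi/(1/2) = 2*Real.pi := by ring
  rw [this, gc]
  have hs : Real.sqrt (2*Real.pi) ≠ 0 := by positivity
  field_simp

open ProbabilityTheory in
lemma measure_toReal_eq (θ : ℝ) :
    ((gaussianReal 0 1) (Set.Ioi θ)).toReal = ∫ z in Ioi θ, gc * Real.exp (-z^2/2) := by
  rw [gaussianReal_apply_eq_integral 0 one_ne_zero]
  rw [ENNReal.toReal_ofReal (integral_nonneg fun x => gaussianPDFReal_nonneg 0 1 x)]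
  exact integral_congr_ae (Filter.Eventually.of_forall fun z => gpdf_eq z)

lemma integral_id_eq (θ : ℝ) :
    (∫ z in Set.Ioi θ, z ∂(gaussianReal 0 1)) = gc * Real.exp (-θ^2/2) := by
  rw [gaussianReal_of_var_ne_zero 0 one_ne_zero]
  have hpdf : gaussianPDF 0 1 = fun x => ((gaussianPDFReal 0 1 x).toNNReal : ℝ≥0∞) := rfl
  rw [hpdf]
  rw [setIntegral_withDensity_eq_setIntegral_smul
    ((measurable_gaussianPDFReal 0 1).real_toNNReal) _ measurableSet_Ioi]
  rw [← integral_A θ]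
  apply integral_congr_ae
  filter_upwards with x
  rw [NNReal.smul_def, smul_eq_mul, Real.coe_toNNReal _ (gaussianPDFReal_nonneg 0 1 x),
    gpdf_eq, mul_comm]

/-- if `Z ∼ N(0,1)` and `θ > 0`, then
`(E[Z ∣ Z > θ])² ≤ 37 log(1 / P(Z > θ))`. -/
theorem sq_condexp_tail_le {θ : ℝ} (hθ : 0 < θ) :
    ((∫ z in Set.Ioi θ, z ∂(gaussianReal 0 1)) /
        ((gaussianReal 0 1) (Set.Ioi θ)).toReal) ^ 2 ≤
      37 * Real.log (1 / ((gaussianReal 0 1) (Set.Ioi θ)).toReal) := by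
  rw [measure_toReal_eq, integral_id_eq]
  set P := ∫ z in Ioi θ, gc * Real.exp (-z^2/2) with hP_def
  set E := Real.exp (-θ^2/2) with hE_def
  have hE_pos : 0 < E := Real.exp_pos _
  rcases le_or_gt 1 θ with h1 | h1
  · -- θ ≥ 1
    have plow : gc * (θ/(θ^2+1)) * E ≤ P := integral_B θ
    have hPpos : 0 < P :=
      lt_of_lt_of_le (mul_pos (mul_pos gc_pos (by positivity)) hE_pos) plow
    have hratio : gc * E / P ≤ (θ^2+1)/θ := by
      rw [div_le_iff₀ hPpos]
      calc gc * E = ((θ^2+1)/θ) * (gc * (θ/(θ^2+1)) * E) := by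
            field_simp
        _ ≤ ((θ^2+1)/θ) * P := mul_le_mul_of_nonneg_left plow (by positivity)
    have hPle : P ≤ E := by
      have := integral_C hθ
      calc P ≤ (1/θ) * (gc * E) := this
        _ ≤ 1 * (1 * E) := by
            apply mul_le_mul _ (mul_le_mul gc_le_one le_rfl hE_pos.le one_pos.le)
              (mul_nonneg gc_pos.le hE_pos.le) one_pos.le
            rw [div_le_one hθ]; exact h1
        _ = E := by ring
    have hlog : θ^2/2 ≤ Real.log (1/P) := by
      rw [one_div, Real.log_inv]
      have : Real.log P ≤ Real.log E := Real.log_le_log hPpos hPle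
      rw [hE_def, Real.log_exp] at this
      linarith
    have hsq : (gc * E / P)^2 ≤ ((θ^2+1)/θ)^2 :=
      pow_le_pow_left₀ (div_nonneg (mul_nonneg gc_pos.le hE_pos.le) hPpos.le) hratio 2
    have hsq2 : ((θ^2+1)/θ)^2 ≤ 37 * (θ^2/2) := by
      rw [div_pow, div_le_iff₀ (by positivity)]
      nlinarith [sq_nonneg θ, sq_nonneg (θ^2-1)]
    calc (gc * E / P)^2 ≤ 37 * (θ^2/2) := le_trans hsq hsq2
      _ ≤ 37 * Real.log (1/P) := by linarith
  · -- θ < 1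
    have plow1 : gc * ((1:ℝ)/((1:ℝ)^2+1)) * Real.exp (-(1:ℝ)^2/2)
        ≤ ∫ z in Ioi (1:ℝ), gc * Real.exp (-z^2/2) := integral_B 1
    have plow : gc * Real.exp (-(1:ℝ)/2) / 2 ≤ P := by
      calc gc * Real.exp (-(1:ℝ)/2) / 2
          = gc * ((1:ℝ)/((1:ℝ)^2+1)) * Real.exp (-(1:ℝ)^2/2) := by norm_num; ring
        _ ≤ ∫ z in Ioi (1:ℝ), gc * Real.exp (-z^2/2) := plow1
        _ ≤ P := integral_mono_tail h1.le
    have hPpos : 0 < P :=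
      lt_of_lt_of_le (div_pos (mul_pos gc_pos (Real.exp_pos _)) two_pos) plow
    have hratio : gc * E / P ≤ 2 * Real.exp (1/2) := by
      rw [div_le_iff₀ hPpos]
      calc gc * E ≤ gc * 1 := by
            apply mul_le_mul_of_nonneg_left _ gc_pos.le
            rw [hE_def]
            exact Real.exp_le_one_iff.mpr (by nlinarith)
        _ = (2 * Real.exp (1/2)) * (gc * Real.exp (-(1:ℝ)/2) / 2) := by
            rw [mul_one]
            rw [show (2:ℝ) * Real.exp (1/2) * (gc * Real.exp (-(1:ℝ)/2)/2)
              = gc * (Real.exp (1/2) * Real.exp (-(1:ℝ)/2)) by ring]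
            rw [← Real.exp_add]
            norm_num
        _ ≤ (2 * Real.exp (1/2)) * P :=
            mul_le_mul_of_nonneg_left plow (by positivity)
    have hPhalf : P ≤ 1/2 := by
      calc P ≤ ∫ z in Ioi (0:ℝ), gc * Real.exp (-z^2/2) := integral_mono_tail hθ.le
        _ = 1/2 := integral_zero_half
    have hlog : Real.log 2 ≤ Real.log (1/P) := by
      apply Real.log_le_log two_pos
      rw [le_one_div two_pos hPpos]
      exact hPhalf
    have hsq : (gc * E / P)^2 ≤ 4 * Real.exp 1 := by
      calc (gc * E / P)^2 ≤ (2 * Real.exp (1/2))^2 :=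
            pow_le_pow_left₀ (div_nonneg (mul_nonneg gc_pos.le hE_pos.le) hPpos.le) hratio 2
        _ = 4 * (Real.exp (1/2) * Real.exp (1/2)) := by ring
        _ = 4 * Real.exp 1 := by rw [← Real.exp_add]; norm_num
    have hnum : 4 * Real.exp 1 ≤ 37 * Real.log 2 := by
      have h1 := Real.exp_one_lt_d9
      have h2 := Real.log_two_gt_d9
      nlinarith
    calc (gc * E / P)^2 ≤ 37 * Real.log 2 := le_trans hsq hnum
      _ ≤ 37 * Real.log (1/P) := by linarith
end

section
/- Let $X$ be a chi-squared random variable with $d$ degrees of freedom and let $m_d$ be its median. Then $\mathbb{E}[\sqrt{X}\,\mathbf{1}_{X \le m_d}] \ge \frac{1}{10}\,\mathbb{E}[\sqrt{X}]$. -/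
open MeasureTheory ProbabilityTheory

open Real
open scoped ENNReal NNReal

lemma gaussPDF01 (x : ℝ) : gaussianPDFReal 0 1 x = (√(2 * π))⁻¹ * rexp (-x ^ 2 / 2) := by
  simp [gaussianPDFReal]

lemma gauss_integral_eq (g : ℝ → ℝ) :
    ∫ x, g x ∂(gaussianReal 0 1) = ∫ x, gaussianPDFReal 0 1 x * g x := by
  rw [gaussianReal_of_var_ne_zero 0 one_ne_zero]
  have h : gaussianPDF 0 1 = fun x => ((Real.toNNReal (gaussianPDFReal 0 1 x) : ℝ≥0) : ℝ≥0∞) := rfl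
  rw [h, integral_withDensity_eq_integral_smul (measurable_gaussianPDFReal 0 1).real_toNNReal]
  congr 1; ext x
  simp [NNReal.smul_def, Real.coe_toNNReal _ (gaussianPDFReal_nonneg 0 1 x)]

lemma gauss_integrable (g : ℝ → ℝ) (hg : Integrable (fun x => g x * gaussianPDFReal 0 1 x)) :
    Integrable g (gaussianReal 0 1) := by
  rw [gaussianReal_of_var_ne_zero 0 one_ne_zero]
  rw [integrable_withDensity_iff (measurable_gaussianPDF 0 1) (ae_of_all _ fun x => ENNReal.ofReal_lt_top)]
  refine hg.congr (ae_of_all _ fun x => ?_)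
  simp only [gaussianPDF]; rw [ENNReal.toReal_ofReal (gaussianPDFReal_nonneg 0 1 x)]

lemma int_Ioi_sq : ∫ x in Set.Ioi (0:ℝ), x ^ 2 * rexp (-x ^ 2 / 2) = √(2 * π) / 2 := by
  have h := integral_rpow_mul_exp_neg_mul_rpow (p := 2) (q := 2) (b := 1/2)
    (by norm_num) (by norm_num) (by norm_num)
  have e : ∀ x : ℝ, x ^ (2:ℝ) * rexp (-(1/2) * x ^ (2:ℝ)) = x ^ 2 * rexp (-x ^ 2 / 2) := by
    intro x
    rw [show (2:ℝ) = ((2:ℕ):ℝ) by norm_num, Real.rpow_natCast]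
    ring_nf
  simp only [e] at h
  rw [h]
  have hG : Real.Gamma ((2+1)/2) = √π / 2 := by
    rw [show ((2+1)/2 : ℝ) = 1/2 + 1 by norm_num, Real.Gamma_add_one (by norm_num),
      Real.Gamma_one_half_eq]; ring
  have hb : ((1/2:ℝ)) ^ ((-(2+1))/2 : ℝ) = 2 * √2 := by
    rw [one_div, Real.inv_rpow (by norm_num), ← Real.rpow_neg (by norm_num)]
    rw [show (-(-(2+1)/2) : ℝ) = 1 + 1/2 by norm_num, Real.rpow_add (by norm_num),
      Real.rpow_one, ← Real.sqrt_eq_rpow]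
  rw [hb, hG, Real.sqrt_mul (by norm_num : (0:ℝ) ≤ 2)]
  ring


lemma int_Ioi_abs : ∫ x in Set.Ioi (0:ℝ), x * rexp (-x ^ 2 / 2) = 1 := by
  have h := integral_rpow_mul_exp_neg_mul_rpow (p := 2) (q := 1) (b := 1/2)
    (by norm_num) (by norm_num) (by norm_num)
  have e : ∀ x : ℝ, x ^ (1:ℝ) * rexp (-(1/2) * x ^ (2:ℝ)) = x * rexp (-x ^ 2 / 2) := by
    intro x
    rw [Real.rpow_one, show (2:ℝ) = ((2:ℕ):ℝ) by norm_num, Real.rpow_natCast]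
    ring_nf
  simp only [e] at h
  rw [h, show ((1+1)/2 : ℝ) = 1 by norm_num, Real.Gamma_one,
    show ((-(1+1))/2 : ℝ) = -1 by norm_num, Real.rpow_neg_one]
  norm_num

lemma int_sq_full : ∫ x : ℝ, x ^ 2 * rexp (-x ^ 2 / 2) = √(2 * π) := by
  have h := integral_comp_abs (f := fun y => y ^ 2 * rexp (-y ^ 2 / 2))
  simp only [sq_abs] at h
  rw [h, int_Ioi_sq]; ring

lemma int_abs_full : ∫ x : ℝ, |x| * rexp (-x ^ 2 / 2) = 2 := by
  have h := integral_comp_abs (f := fun y => y * rexp (-y ^ 2 / 2))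
  simp only [sq_abs] at h
  rw [h, int_Ioi_abs]; ring

lemma sqrt_two_pi_pos : (0:ℝ) < √(2 * π) := Real.sqrt_pos.mpr (by positivity)

lemma gauss_sq_moment : ∫ x, x ^ 2 ∂(gaussianReal 0 1) = 1 := by
  rw [gauss_integral_eq]
  have e : ∀ x : ℝ, gaussianPDFReal 0 1 x * x ^ 2
      = (√(2 * π))⁻¹ * (x ^ 2 * rexp (-x ^ 2 / 2)) := by
    intro x; rw [gaussPDF01]; ring
  simp only [e]
  rw [integral_const_mul, int_sq_full, inv_mul_cancel₀ (ne_of_gt sqrt_two_pi_pos)]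

lemma gauss_abs_moment : ∫ x, |x| ∂(gaussianReal 0 1) = 2 / √(2 * π) := by
  rw [gauss_integral_eq]
  have e : ∀ x : ℝ, gaussianPDFReal 0 1 x * |x|
      = (√(2 * π))⁻¹ * (|x| * rexp (-x ^ 2 / 2)) := by
    intro x; rw [gaussPDF01]; ring
  simp only [e]
  rw [integral_const_mul, int_abs_full]
  ring

lemma gauss_sq_integrable : Integrable (fun x => x ^ 2) (gaussianReal 0 1) := by
  apply gauss_integrable
  have h : Integrable (fun x : ℝ => (√(2 * π))⁻¹ * (x ^ 2 * rexp (-(1/2) * x ^ 2))) :=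
    ((integrable_rpow_mul_exp_neg_mul_sq (by norm_num : (0:ℝ) < 1/2)
      (by norm_num : (-1:ℝ) < 2)).congr (ae_of_all _ fun x => by
        simp [Real.rpow_natCast])).const_mul _
  refine h.congr (ae_of_all _ fun x => ?_)
  simp only [gaussPDF01]; ring_nf

lemma gauss_abs_integrable : Integrable (fun x => |x|) (gaussianReal 0 1) := by
  apply gauss_integrable
  have h0 : Integrable (fun x : ℝ => x * rexp (-(1/2) * x ^ 2)) :=
    (integrable_rpow_mul_exp_neg_mul_sq (by norm_num : (0:ℝ) < 1/2)
      (by norm_num : (-1:ℝ) < 1)).congr (ae_of_all _ fun x => by simp [Real.rpow_one])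
  have h : Integrable (fun x : ℝ => (√(2 * π))⁻¹ * |x * rexp (-(1/2) * x ^ 2)|) :=
    h0.abs.const_mul _
  refine h.congr (ae_of_all _ fun x => ?_)
  simp only [gaussPDF01, abs_mul, Real.abs_exp]
  ring_nf

/-- if `X ∼ χ²_d` (the sum of squares of `d` i.i.d. standard normals)
and `m` is its median, then `E[√X 1_{X ≤ m}] ≥ (1/10) E[√X]`. -/
theorem sqrt_chiSq_truncated_expectation_ge
    {Ω : Type*} [MeasurableSpace Ω] (μ : Measure Ω) [IsProbabilityMeasure μ]
    {d : ℕ} (hd : 0 < d)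
    (Z : Fin d → Ω → ℝ)
    (hindep : iIndepFun (m := fun _ : Fin d => (inferInstance : MeasurableSpace ℝ)) Z μ)
    (hgauss : ∀ i, Measure.map (Z i) μ = gaussianReal 0 1)
    (X : Ω → ℝ) (hX : ∀ ω, X ω = ∑ i, (Z i ω) ^ 2)
    (m : ℝ) (hmed : μ {ω | X ω ≤ m} = 1 / 2) :
    (1 / 10 : ℝ) * ∫ ω, Real.sqrt (X ω) ∂μ ≤
      ∫ ω in {ω | X ω ≤ m}, Real.sqrt (X ω) ∂μ := by
  have hdR : (0:ℝ) < d := Nat.cast_pos.mpr hd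
  have hZae : ∀ i, AEMeasurable (Z i) μ := by
    intro i
    by_contra h
    have h0 := Measure.map_of_not_aemeasurable h
    rw [hgauss i] at h0
    exact (IsProbabilityMeasure.ne_zero (gaussianReal 0 1)) h0
  have hZsq_int : ∀ i, Integrable (fun ω => (Z i ω) ^ 2) μ := by
    intro i
    exact (integrable_map_measure (f := Z i) (g := fun x : ℝ => x ^ 2)
      (by rw [hgauss i]; exact (continuous_pow 2).aestronglyMeasurable) (hZae i)).mp
      (by rw [hgauss i]; exact gauss_sq_integrable)
  have hZsq_eq : ∀ i, ∫ ω, (Z i ω) ^ 2 ∂μ = 1 := by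
    intro i
    have h1 : ∫ x, x ^ 2 ∂(Measure.map (Z i) μ) = ∫ ω, (Z i ω) ^ 2 ∂μ :=
      integral_map (hZae i) (by rw [hgauss i]; exact (continuous_pow 2).aestronglyMeasurable)
    rw [hgauss i, gauss_sq_moment] at h1
    exact h1.symm
  have hZabs_int : ∀ i, Integrable (fun ω => |Z i ω|) μ := by
    intro i
    exact (integrable_map_measure (f := Z i) (g := fun x : ℝ => |x|)
      (by rw [hgauss i]; exact continuous_abs.aestronglyMeasurable) (hZae i)).mp
      (by rw [hgauss i]; exact gauss_abs_integrable)
  have hZabs_eq : ∀ i, ∫ ω, |Z i ω| ∂μ = 2 / √(2 * π) := by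
    intro i
    have h1 : ∫ x, |x| ∂(Measure.map (Z i) μ) = ∫ ω, |Z i ω| ∂μ :=
      integral_map (hZae i) (by rw [hgauss i]; exact continuous_abs.aestronglyMeasurable)
    rw [hgauss i, gauss_abs_moment] at h1
    exact h1.symm
  have hXnn : ∀ ω, 0 ≤ X ω := fun ω => (hX ω) ▸ Finset.sum_nonneg fun i _ => sq_nonneg _
  have hXint : Integrable X μ :=
    (integrable_finset_sum _ (fun i _ => hZsq_int i)).congr (ae_of_all _ fun ω => (hX ω).symm)
  have hEX : ∫ ω, X ω ∂μ = d := by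
    rw [integral_congr_ae (ae_of_all _ hX), integral_finset_sum _ (fun i _ => hZsq_int i)]
    simp [hZsq_eq]
  have hXae : AEMeasurable X μ := by
    have h1 : AEMeasurable (fun ω => ∑ i, (Z i ω) ^ 2) μ :=
      Finset.aemeasurable_fun_sum _ fun i _ => ((hZae i).pow_const 2)
    exact h1.congr (ae_of_all _ fun ω => (hX ω).symm)
  have hsqrt_int : Integrable (fun ω => √(X ω)) μ := by
    refine Integrable.mono ((integrable_const (1:ℝ)).add hXint)
      (Real.continuous_sqrt.measurable.comp_aemeasurable hXae).aestronglyMeasurable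
      (ae_of_all _ fun ω => ?_)
    have hs := Real.sq_sqrt (hXnn ω)
    have hsn := Real.sqrt_nonneg (X ω)
    simp only [Real.norm_eq_abs, Function.comp, Pi.add_apply]
    rw [abs_of_nonneg hsn, abs_of_nonneg (by linarith [hXnn ω] : (0:ℝ) ≤ 1 + X ω)]
    nlinarith
  set c : ℝ := √(2 * d) with hc
  have hcpos : 0 < c := Real.sqrt_pos.mpr (by positivity)
  have hc2 : c ^ 2 = 2 * d := Real.sq_sqrt (by positivity)
  -- lower bound on the full integral
  have hlow : c / √π ≤ ∫ ω, Real.sqrt (X ω) ∂μ := by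
    have hpt : ∀ ω, (∑ i, |Z i ω|) / √d ≤ √(X ω) := by
      intro ω
      have hCS := Finset.sum_mul_sq_le_sq_mul_sq Finset.univ (fun _ : Fin d => (1:ℝ))
        (fun i => |Z i ω|)
      simp only [one_mul, one_pow, Finset.sum_const, Finset.card_univ, Fintype.card_fin,
        nsmul_eq_mul, mul_one, sq_abs] at hCS
      have hsum : (∑ i, |Z i ω|) ≤ √((d:ℝ) * X ω) := by
        rw [Real.le_sqrt (Finset.sum_nonneg fun i _ => abs_nonneg _) (mul_nonneg hdR.le (hXnn ω))]
        rw [hX ω]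
        exact hCS
      rw [Real.sqrt_mul (le_of_lt hdR) (X ω)] at hsum
      rw [div_le_iff₀ (Real.sqrt_pos.mpr hdR)]
      linarith [hsum, mul_comm (Real.sqrt (d:ℝ)) (Real.sqrt (X ω))]
    have hint1 : Integrable (fun ω => (∑ i, |Z i ω|) / √d) μ :=
      (integrable_finset_sum _ (fun i _ => hZabs_int i)).div_const _
    have h1 : ∫ ω, (∑ i, |Z i ω|) / √d ∂μ ≤ ∫ ω, √(X ω) ∂μ :=
      integral_mono hint1 hsqrt_int hpt
    have h2 : ∫ ω, (∑ i, |Z i ω|) / √d ∂μ = (d:ℝ) * (2 / √(2 * π)) / √d := by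
      rw [integral_div, integral_finset_sum _ (fun i _ => hZabs_int i)]
      simp [hZabs_eq]
    rw [h2] at h1
    refine le_trans (le_of_eq ?_) h1
    -- c / √π = d * (2 / √(2π)) / √d
    rw [hc, Real.sqrt_mul (by norm_num : (0:ℝ) ≤ 2) (d:ℝ),
      Real.sqrt_mul (by norm_num : (0:ℝ) ≤ 2) π]
    rw [div_eq_div_iff (by positivity) (by positivity)]
    have hdd : (d:ℝ) = √d * √d := (Real.mul_self_sqrt (le_of_lt hdR)).symm
    have h22 : √2 * √2 = 2 := Real.mul_self_sqrt (by norm_num)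
    field_simp
    rw [Real.sq_sqrt (by norm_num : (0:ℝ) ≤ 2), Real.sq_sqrt hdR.le]; ring
  -- the median set
  set S : Set Ω := {ω | X ω ≤ m} with hS
  have hSnm : NullMeasurableSet S μ := hXae.nullMeasurable measurableSet_Iic
  have hμSc : μ Sᶜ = 1/2 := by
    rw [measure_compl₀ hSnm (measure_ne_top μ S), measure_univ, hmed, one_div,
      ENNReal.one_sub_inv_two]
  -- tail bound
  have htail : ∫ ω in Sᶜ, √(X ω) ∂μ ≤ c / 2 := by
    have hpt : ∀ ω, √(X ω) ≤ (X ω + 2 * d) / (2 * c) := by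
      intro ω
      have hs := Real.sq_sqrt (hXnn ω)
      have hsn := Real.sqrt_nonneg (X ω)
      rw [le_div_iff₀ (by positivity)]
      nlinarith [sq_nonneg (√(X ω) - c)]
    have hint2 : Integrable (fun ω => (X ω + 2 * d) / (2 * c)) μ :=
      (hXint.add (integrable_const _)).div_const _
    calc ∫ ω in Sᶜ, √(X ω) ∂μ ≤ ∫ ω in Sᶜ, (X ω + 2 * d) / (2 * c) ∂μ :=
          setIntegral_mono hsqrt_int.integrableOn hint2.integrableOn hpt
      _ = ((∫ ω in Sᶜ, X ω ∂μ) + 2 * d * (1/2)) / (2 * c) := by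
          rw [integral_div, integral_add hXint.integrableOn (integrable_const _),
            setIntegral_const, measureReal_def, hμSc]
          norm_num
          ring
      _ ≤ ((d:ℝ) + 2 * d * (1/2)) / (2 * c) := by
          have hle : ∫ ω in Sᶜ, X ω ∂μ ≤ (d:ℝ) :=
            hEX ▸ setIntegral_le_integral hXint (ae_of_all _ hXnn)
          gcongr
      _ = c / 2 := by
          rw [div_eq_div_iff (by positivity) (by norm_num)]
          nlinarith
  -- combine
  have hsplit := integral_add_compl₀ hSnm hsqrt_int
  have hpi : √π ≤ (9/5) := by
    have h1 : π ≤ (81/25) := le_of_lt (lt_trans Real.pi_lt_d2 (by norm_num))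
    have h2 : √((81/25):ℝ) = (9/5) := by
      rw [show ((81/25):ℝ) = (9/5) ^ 2 by norm_num, Real.sqrt_sq (by norm_num)]
    calc √π ≤ √((81/25):ℝ) := Real.sqrt_le_sqrt h1
      _ = (9/5) := h2
  have hpipos : (0:ℝ) < √π := Real.sqrt_pos.mpr Real.pi_pos
  have hlow2 : c / (9/5) ≤ ∫ ω, Real.sqrt (X ω) ∂μ :=
    le_trans (by gcongr) hlow
  -- goal
  have hA : ∫ ω in S, √(X ω) ∂μ = (∫ ω, √(X ω) ∂μ) - ∫ ω in Sᶜ, √(X ω) ∂μ := by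
    linarith [hsplit]
  rw [hA]
  linarith [htail, hlow2]
end

section
/- Let $\boldsymbol{Z} = (Z_1,\ldots,Z_d) \sim N(0, I_d)$ and let $m_d$ denote the median of the $\chi^2_d$ distribution. Then $\frac{1}{10\sqrt{2}} \le \mathbb{E}[\max_{1\le i\le d}|Z_i|\, \mathbf{1}_{\|\boldsymbol{Z}\|^2 \le m_d}] \le \sqrt{2\log(2d)}$. -/
open MeasureTheory ProbabilityTheory Real
open scoped NNReal ENNReal

section Helpers

lemma gauss_pdf_mul (t x : ℝ) :
    gaussianPDFReal 0 1 x * rexp (t * x)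
      = (Real.sqrt (2 * π))⁻¹ * (rexp (t ^ 2 / 2) * rexp (-(1 / 2) * (x - t) ^ 2)) := by
  simp only [gaussianPDFReal, NNReal.coe_one, mul_one, sub_zero]
  rw [mul_assoc, ← Real.exp_add, ← Real.exp_add]
  congr 1
  ring

lemma integrable_gauss_shift (t : ℝ) :
    Integrable (fun x => rexp (-(1 / 2) * (x - t) ^ 2)) (volume : Measure ℝ) :=
  (integrable_exp_neg_mul_sq (by norm_num : (0:ℝ) < 1/2)).comp_sub_right t

lemma integral_gauss_shift (t : ℝ) :
    ∫ x, rexp (-(1 / 2) * (x - t) ^ 2) = Real.sqrt (2 * π) := by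
  have h := integral_sub_right_eq_self (fun x => rexp (-(1 / 2) * x ^ 2)) (μ := volume) t
  rw [h, integral_gaussian]
  rw [show (π / (1/2) : ℝ) = 2 * π by ring]

lemma gaussianReal_eq_withDensity :
    gaussianReal 0 1 = (volume : Measure ℝ).withDensity
      (fun x => ((gaussianPDFReal 0 1 x).toNNReal : ENNReal)) := by
  rw [gaussianReal_of_var_ne_zero _ one_ne_zero]
  rfl

lemma gauss_mgf (t : ℝ) :
    Integrable (fun x => rexp (t * x)) (gaussianReal 0 1) ∧
    ∫ x, rexp (t * x) ∂(gaussianReal 0 1) = rexp (t ^ 2 / 2) := by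
  have hmeas : Measurable fun x => (gaussianPDFReal 0 1 x).toNNReal :=
    (measurable_gaussianPDFReal 0 1).real_toNNReal
  have hfun : (fun x => ((gaussianPDFReal 0 1 x).toNNReal : ℝ≥0) • rexp (t * x))
      = fun x => ((Real.sqrt (2 * π))⁻¹ * rexp (t ^ 2 / 2)) * rexp (-(1 / 2) * (x - t) ^ 2) := by
    funext x
    rw [NNReal.smul_def, smul_eq_mul, Real.coe_toNNReal _ (gaussianPDFReal_nonneg 0 1 x),
      gauss_pdf_mul]
    ring
  have hsqrt : Real.sqrt (2 * π) ≠ 0 := by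
    positivity
  constructor
  · rw [gaussianReal_eq_withDensity, integrable_withDensity_iff_integrable_smul hmeas, hfun]
    exact (integrable_gauss_shift t).const_mul _
  · rw [gaussianReal_eq_withDensity, integral_withDensity_eq_integral_smul hmeas, hfun,
      integral_const_mul, integral_gauss_shift]
    field_simp

lemma gauss_small :
    (gaussianReal 0 1) {x : ℝ | |x| < 3/10}
      ≤ ENNReal.ofReal ((3/5) * (Real.sqrt (2 * π))⁻¹) := by
  have hset : {x : ℝ | |x| < 3/10} = Set.Ioo (-(3/10)) (3/10) := by
    ext x; simp [abs_lt, Set.mem_Ioo]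
  rw [hset, gaussianReal_apply_eq_integral 0 one_ne_zero]
  refine ENNReal.ofReal_le_ofReal ?_
  have hconst : ∀ x : ℝ, gaussianPDFReal 0 1 x ≤ (Real.sqrt (2 * π))⁻¹ := by
    intro x
    simp only [gaussianPDFReal, NNReal.coe_one, mul_one, sub_zero]
    have h1 : rexp (-x ^ 2 / 2) ≤ 1 := by
      rw [Real.exp_le_one_iff]
      nlinarith [sq_nonneg x]
    have h2 : (0:ℝ) ≤ (Real.sqrt (2 * π))⁻¹ := by positivity
    calc (Real.sqrt (2 * π))⁻¹ * rexp (-x ^ 2 / 2) ≤ (Real.sqrt (2 * π))⁻¹ * 1 :=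
          mul_le_mul_of_nonneg_left h1 h2
      _ = (Real.sqrt (2 * π))⁻¹ := mul_one _
  calc ∫ x in Set.Ioo (-(3/10)) (3/10), gaussianPDFReal 0 1 x
      ≤ ∫ _x in Set.Ioo (-(3/10):ℝ) (3/10), (Real.sqrt (2 * π))⁻¹ := by
        refine setIntegral_mono_on ((integrable_gaussianPDFReal 0 1).restrict)
          (integrableOn_const measure_Ioo_lt_top.ne) measurableSet_Ioo ?_
        intro x _
        exact hconst x
    _ = (3/5) * (Real.sqrt (2 * π))⁻¹ := by
        rw [setIntegral_const, smul_eq_mul]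
        have hv : (volume (Set.Ioo (-(3/10):ℝ) (3/10))).toReal = 3/5 := by
          rw [Real.volume_Ioo, ENNReal.toReal_ofReal (by norm_num)]
          norm_num
        rw [measureReal_def, hv]

lemma measurable_finset_sup' {ι : Type*} {Ω : Type*} [MeasurableSpace Ω]
    (s : Finset ι) (hs : s.Nonempty) (f : ι → Ω → ℝ) (hf : ∀ i, Measurable (f i)) :
    Measurable (fun ω => s.sup' hs fun i => f i ω) := by
  have h := Finset.measurable_sup' hs (fun i _ => hf i)
  have heq : (fun ω => s.sup' hs fun i => f i ω) = s.sup' hs f := by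
    funext ω
    exact (Finset.sup'_apply hs f ω).symm
  rw [heq]
  exact h

end Helpers

set_option maxHeartbeats 1000000 in
/-- for `Z = (Z₁,…,Z_d) ∼ N(0, I_d)` and `m` the median of the `χ²_d`
variable `Σᵢ Zᵢ²`, one has
`1/(10√2) ≤ E[maxᵢ |Zᵢ| · 1_{Σᵢ Zᵢ² ≤ m}] ≤ √(2 log(2d))`. -/
theorem truncated_max_abs_gaussian_bounds
    {Ω : Type*} [MeasurableSpace Ω] (μ : Measure Ω) [IsProbabilityMeasure μ]
    {d : ℕ} (hd : 0 < d)
    (Z : Fin d → Ω → ℝ)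
    (hindep : iIndepFun Z μ)
    (hgauss : ∀ i, Measure.map (Z i) μ = gaussianReal 0 1)
    (m : ℝ) (hmed : μ {ω | ∑ i, (Z i ω) ^ 2 ≤ m} = 1 / 2) :
    1 / (10 * Real.sqrt 2) ≤
      ∫ ω in {ω | ∑ i, (Z i ω) ^ 2 ≤ m}, (⨆ i, |Z i ω|) ∂μ ∧
    (∫ ω in {ω | ∑ i, (Z i ω) ^ 2 ≤ m}, (⨆ i, |Z i ω|) ∂μ) ≤
      Real.sqrt (2 * Real.log (2 * d)) := by
  classical
  haveI : Nonempty (Fin d) := ⟨⟨0, hd⟩⟩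
  -- measurable versions of the Z i
  have haem : ∀ i, AEMeasurable (Z i) μ := by
    intro i
    by_contra h
    have h0 := Measure.map_of_not_aemeasurable h
    rw [hgauss i] at h0
    exact (IsProbabilityMeasure.ne_zero (gaussianReal 0 1)) h0
  set W : Fin d → Ω → ℝ := fun i => (haem i).mk _ with hWdef
  have hWmeas : ∀ i, Measurable (W i) := fun i => (haem i).measurable_mk
  have hWeq : ∀ i, Z i =ᵐ[μ] W i := fun i => (haem i).ae_eq_mk
  have hWgauss : ∀ i, Measure.map (W i) μ = gaussianReal 0 1 := fun i => by
    rw [← Measure.map_congr (hWeq i), hgauss i]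
  have hae : ∀ᵐ ω ∂μ, ∀ i, Z i ω = W i ω := by
    rw [MeasureTheory.ae_all_iff]; exact hWeq
  set A : Set Ω := {ω | ∑ i, (Z i ω) ^ 2 ≤ m} with hAdef
  set A' : Set Ω := {ω | ∑ i, (W i ω) ^ 2 ≤ m} with hA'def
  have hA'meas : MeasurableSet A' := by
    refine measurableSet_le ?_ measurable_const
    exact Finset.measurable_sum _ fun i _ => ((hWmeas i).pow_const 2)
  have hAA' : A =ᵐ[μ] A' := by
    rw [Filter.eventuallyEq_set]
    filter_upwards [hae] with ω hω
    have hsum : ∑ i, (Z i ω) ^ 2 = ∑ i, (W i ω) ^ 2 :=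
      Finset.sum_congr rfl fun i _ => by rw [hω i]
    simp only [hAdef, hA'def, Set.mem_setOf_eq, hsum]
  have hrestrict : μ.restrict A = μ.restrict A' := Measure.restrict_congr_set hAA'
  have hμA' : μ A' = 1 / 2 := by rw [← measure_congr hAA']; exact hmed
  -- the max function
  set M : Ω → ℝ := fun ω => Finset.univ.sup' Finset.univ_nonempty (fun i => |W i ω|) with hMdef
  have hMmeas : Measurable M :=
    measurable_finset_sup' _ _ _ fun i => (hWmeas i).abs
  have hM_le : ∀ ω i, |W i ω| ≤ M ω := fun ω i => by
    simp only [hMdef]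
    exact Finset.le_sup' (fun i => |W i ω|) (Finset.mem_univ i)
  have hM_nonneg : ∀ ω, 0 ≤ M ω := fun ω =>
    le_trans (abs_nonneg _) (hM_le ω ⟨0, hd⟩)
  have hM_eq : ∀ᵐ ω ∂μ, (⨆ i, |Z i ω|) = M ω := by
    filter_upwards [hae] with ω hω
    have h1 : (⨆ i, |Z i ω|) = ⨆ i, |W i ω| := iSup_congr fun i => by rw [hω i]
    rw [h1]
    apply le_antisymm
    · exact ciSup_le fun i => hM_le ω i
    · exact Finset.sup'_le _ _ fun i _ =>
        le_ciSup (f := fun i => |W i ω|) (Set.finite_range _).bddAbove i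
  have hgoal_eq : ∫ ω in A, (⨆ i, |Z i ω|) ∂μ = ∫ ω in A', M ω ∂μ := by
    rw [hrestrict]
    exact integral_congr_ae (ae_restrict_of_ae hM_eq)
  -- exponential moments
  have h_exp_int : ∀ (i : Fin d) (t : ℝ), Integrable (fun ω => rexp (t * W i ω)) μ := by
    intro i t
    have h1 := (gauss_mgf t).1
    rw [← hWgauss i] at h1
    have h2 := (integrable_map_measure h1.aestronglyMeasurable (hWmeas i).aemeasurable).mp h1
    exact h2
  have h_exp_val : ∀ (i : Fin d) (t : ℝ), ∫ ω, rexp (t * W i ω) ∂μ = rexp (t ^ 2 / 2) := by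
    intro i t
    have h1 := (gauss_mgf t).2
    rw [← hWgauss i, integral_map (hWmeas i).aemeasurable] at h1
    · exact h1
    · exact (Real.continuous_exp.comp (continuous_const.mul continuous_id)).aestronglyMeasurable
  -- integrability of |W i| and of M
  have h_absint : ∀ i, Integrable (fun ω => |W i ω|) μ := by
    intro i
    refine Integrable.mono' ((h_exp_int i 1).add (h_exp_int i (-1)))
      ((hWmeas i).abs.aestronglyMeasurable) (ae_of_all _ fun ω => ?_)
    simp only [Pi.add_apply, Real.norm_eq_abs, abs_abs]
    have h1 : |W i ω| + 1 ≤ rexp |W i ω| := Real.add_one_le_exp _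
    have h2 : rexp |W i ω| ≤ rexp (1 * W i ω) + rexp ((-1) * W i ω) := by
      rcases abs_cases (W i ω) with ⟨h, _⟩ | ⟨h, _⟩ <;> rw [h] <;>
        [skip; rw [show -W i ω = (-1) * W i ω by ring]] <;>
        simp only [one_mul, neg_one_mul] <;>
        nlinarith [Real.exp_pos (W i ω), Real.exp_pos (-W i ω)]
    linarith
  have hMint : Integrable M μ := by
    refine Integrable.mono' (integrable_finset_sum Finset.univ fun i _ => h_absint i)
      hMmeas.aestronglyMeasurable (ae_of_all _ fun ω => ?_)
    rw [Real.norm_eq_abs, abs_of_nonneg (hM_nonneg ω)]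
    exact Finset.sup'_le _ _ fun i _ =>
      Finset.single_le_sum (f := fun i => |W i ω|) (fun j _ => abs_nonneg _) (Finset.mem_univ i)
  -- UPPER BOUND
  have hd1 : (1:ℝ) ≤ (d:ℝ) := by exact_mod_cast hd
  have hlog : 0 < Real.log (2 * d) := Real.log_pos (by linarith)
  set β : ℝ := Real.sqrt (2 * Real.log (2 * d)) with hβdef
  have hβpos : 0 < β := Real.sqrt_pos.mpr (by positivity)
  have hβsq : β ^ 2 = 2 * Real.log (2 * d) := Real.sq_sqrt (by positivity)
  have hpt : ∀ ω, rexp (β * M ω) ≤ ∑ i, (rexp (β * W i ω) + rexp ((-β) * W i ω)) := by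
    intro ω
    obtain ⟨j, _, hj⟩ := Finset.exists_mem_eq_sup' Finset.univ_nonempty (fun i => |W i ω|)
    have hMj : M ω = |W j ω| := hj
    have h2 : rexp (β * M ω) ≤ rexp (β * W j ω) + rexp ((-β) * W j ω) := by
      rw [hMj]
      rcases abs_cases (W j ω) with ⟨h, _⟩ | ⟨h, _⟩ <;> rw [h] <;>
        [skip; rw [show β * -W j ω = (-β) * W j ω by ring]] <;>
        nlinarith [Real.exp_pos (β * W j ω), Real.exp_pos ((-β) * W j ω)]
    refine h2.trans ?_
    exact Finset.single_le_sum
      (f := fun i => rexp (β * W i ω) + rexp ((-β) * W i ω))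
      (fun i _ => by positivity) (Finset.mem_univ j)
  have hterm : ∀ i : Fin d, Integrable (fun ω => rexp (β * W i ω) + rexp ((-β) * W i ω)) μ :=
    fun i => (h_exp_int i β).add (h_exp_int i (-β))
  have hsum_int : Integrable (fun ω => ∑ i, (rexp (β * W i ω) + rexp ((-β) * W i ω))) μ :=
    integrable_finset_sum _ fun i _ => hterm i
  have hexpM_int : Integrable (fun ω => rexp (β * M ω)) μ := by
    refine Integrable.mono' hsum_int
      ((Real.continuous_exp.measurable.comp (hMmeas.const_mul β)).aestronglyMeasurable)
      (ae_of_all _ fun ω => ?_)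
    rw [Real.norm_eq_abs, abs_of_nonneg (Real.exp_pos _).le]
    exact hpt ω
  set I : ℝ := ∫ ω, M ω ∂μ with hIdef
  have hkey : rexp (β * I) ≤ ∫ ω, rexp (β * M ω) ∂μ := by
    have e0 : Integrable (fun ω => β * M ω) μ := hMint.const_mul β
    have e1 : Integrable (fun ω => β * M ω - β * I) μ := e0.sub (integrable_const _)
    have e2 : Integrable (fun ω => rexp (β * I) * (β * M ω - β * I)) μ := e1.const_mul _
    have hlin_int : Integrable (fun ω => rexp (β * I) + rexp (β * I) * (β * M ω - β * I)) μ :=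
      (integrable_const _).add e2
    have hIM : ∫ ω, β * M ω ∂μ = β * I := by
      rw [integral_const_mul, hIdef]
    have hlin_val : ∫ ω, (rexp (β * I) + rexp (β * I) * (β * M ω - β * I)) ∂μ = rexp (β * I) := by
      rw [integral_add (integrable_const _) e2, integral_const, integral_const_mul,
        integral_sub e0 (integrable_const _), hIM, integral_const]
      simp
    calc rexp (β * I) = ∫ ω, (rexp (β * I) + rexp (β * I) * (β * M ω - β * I)) ∂μ :=
          hlin_val.symm
      _ ≤ ∫ ω, rexp (β * M ω) ∂μ := by
          refine integral_mono hlin_int hexpM_int fun ω => ?_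
          have h1 : (β * M ω - β * I) + 1 ≤ rexp (β * M ω - β * I) := Real.add_one_le_exp _
          have h2 : rexp (β * I) * ((β * M ω - β * I) + 1)
              ≤ rexp (β * I) * rexp (β * M ω - β * I) :=
            mul_le_mul_of_nonneg_left h1 (Real.exp_pos _).le
          rw [← Real.exp_add] at h2
          have h3 : β * I + (β * M ω - β * I) = β * M ω := by ring
          rw [h3] at h2
          nlinarith
  have hsumbound : ∫ ω, rexp (β * M ω) ∂μ ≤ 2 * d * rexp (β ^ 2 / 2) := by
    calc ∫ ω, rexp (β * M ω) ∂μ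
        ≤ ∫ ω, ∑ i, (rexp (β * W i ω) + rexp ((-β) * W i ω)) ∂μ :=
          integral_mono hexpM_int hsum_int hpt
      _ = ∑ i : Fin d, (rexp (β ^ 2 / 2) + rexp (β ^ 2 / 2)) := by
          rw [integral_finset_sum _ fun i _ => hterm i]
          refine Finset.sum_congr rfl fun i _ => ?_
          rw [integral_add (h_exp_int i β) (h_exp_int i (-β)), h_exp_val i β, h_exp_val i (-β)]
          ring_nf
      _ = 2 * d * rexp (β ^ 2 / 2) := by
          rw [Finset.sum_const, Finset.card_univ, Fintype.card_fin]
          push_cast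
          ring
  have hIle : I ≤ β := by
    have h1 : rexp (β * I) ≤ 2 * d * rexp (β ^ 2 / 2) := hkey.trans hsumbound
    have h2 : β * I ≤ Real.log (2 * d * rexp (β ^ 2 / 2)) := by
      rw [← Real.log_exp (β * I)]
      exact Real.log_le_log (Real.exp_pos _) h1
    rw [Real.log_mul (by positivity) (Real.exp_ne_zero _), Real.log_exp] at h2
    have h3 : β * I ≤ β ^ 2 := by
      rw [hβsq]
      nlinarith [h2, hβsq]
    nlinarith
  have hupper : ∫ ω in A', M ω ∂μ ≤ β := by
    refine le_trans ?_ hIle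
    exact setIntegral_le_integral hMint (ae_of_all _ fun ω => hM_nonneg ω)
  -- LOWER BOUND
  set i0 : Fin d := ⟨0, hd⟩
  set B : Set Ω := {ω | (3/10 : ℝ) ≤ |W i0 ω|} with hBdef
  have hBmeas : MeasurableSet B := measurableSet_le measurable_const (hWmeas i0).abs
  have hsmallmeas : MeasurableSet {x : ℝ | |x| < 3/10} :=
    measurableSet_lt measurable_id.abs measurable_const
  have hμB : ENNReal.ofReal (1 - (3/5) * (Real.sqrt (2 * π))⁻¹) ≤ μ B := by
    have hcompl : B = (W i0) ⁻¹' {x : ℝ | |x| < 3/10}ᶜ := by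
      ext ω
      simp [hBdef, not_lt]
    have hmapped : μ ((W i0) ⁻¹' {x : ℝ | |x| < 3/10}) ≤
        ENNReal.ofReal ((3/5) * (Real.sqrt (2 * π))⁻¹) := by
      rw [← Measure.map_apply (hWmeas i0) hsmallmeas, hWgauss i0]
      exact gauss_small
    have hc : μ B = 1 - μ ((W i0) ⁻¹' {x : ℝ | |x| < 3/10}) := by
      rw [hcompl, Set.preimage_compl, measure_compl ((hWmeas i0) hsmallmeas)
        (measure_ne_top μ _), measure_univ]
    rw [hc]
    have h06 : (3/5 : ℝ) * (Real.sqrt (2 * π))⁻¹ ≤ 1 := by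
      have hs : (1:ℝ) ≤ Real.sqrt (2 * π) := by
        rw [show (1:ℝ) = Real.sqrt 1 by simp]
        exact Real.sqrt_le_sqrt (by nlinarith [Real.pi_gt_three])
      have : (Real.sqrt (2 * π))⁻¹ ≤ 1 := by
        rw [inv_le_one_iff₀]; right; exact hs
      nlinarith [Real.sqrt_nonneg (2 * π)]
    calc ENNReal.ofReal (1 - (3/5) * (Real.sqrt (2 * π))⁻¹)
        = 1 - ENNReal.ofReal ((3/5) * (Real.sqrt (2 * π))⁻¹) := by
          rw [ENNReal.ofReal_sub _ (by positivity), ENNReal.ofReal_one]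
      _ ≤ 1 - μ ((W i0) ⁻¹' {x : ℝ | |x| < 3/10}) := by
          exact tsub_le_tsub_left hmapped 1
  have hinter : μ B + μ A' ≤ 1 + μ (B ∩ A') := by
    have h1 := measure_union_add_inter (μ := μ) B hA'meas
    calc μ B + μ A' = μ (B ∪ A') + μ (B ∩ A') := h1.symm
      _ ≤ 1 + μ (B ∩ A') := add_le_add_left prob_le_one _
  -- convert to reals
  set x : ℝ := (μ (B ∩ A')).toReal with hxdef
  have hxreal : (3/10 : ℝ) * x ≤ ∫ ω in A', M ω ∂μ := by
    have hind_eq : ∫ ω in A', Set.indicator B (fun _ => (3/10:ℝ)) ω ∂μ = (3/10) * x := by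
      rw [integral_indicator hBmeas, setIntegral_const, measureReal_def, Measure.restrict_apply hBmeas]
      simp [hxdef, smul_eq_mul, mul_comm]
    rw [← hind_eq]
    refine integral_mono ((integrable_const (3/10:ℝ)).indicator hBmeas).restrict
      hMint.restrict fun ω => ?_
    by_cases hω : ω ∈ B
    · rw [Set.indicator_of_mem hω]
      exact le_trans hω (hM_le ω i0)
    · rw [Set.indicator_of_notMem hω]
      exact hM_nonneg ω
  have hxlow : 1/2 - (3/5) * (Real.sqrt (2 * π))⁻¹ ≤ x := by
    have hrB : (1 - (3/5) * (Real.sqrt (2 * π))⁻¹ : ℝ) ≤ (μ B).toReal := by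
      rcases le_or_gt (1 - (3/5) * (Real.sqrt (2 * π))⁻¹ : ℝ) 0 with h | h
      · exact h.trans ENNReal.toReal_nonneg
      · calc (1 - (3/5) * (Real.sqrt (2 * π))⁻¹ : ℝ)
            = (ENNReal.ofReal (1 - (3/5) * (Real.sqrt (2 * π))⁻¹)).toReal :=
              (ENNReal.toReal_ofReal h.le).symm
          _ ≤ (μ B).toReal := ENNReal.toReal_le_toReal (by simp) (measure_ne_top μ B) |>.mpr hμB
    have htr : (μ B).toReal + (1/2 : ℝ) ≤ 1 + x := by
      have h2 : (μ B + μ A').toReal ≤ (1 + μ (B ∩ A')).toReal :=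
        ENNReal.toReal_le_toReal (by finiteness) (by finiteness) |>.mpr hinter
      rw [ENNReal.toReal_add (measure_ne_top μ _) (measure_ne_top μ _),
        ENNReal.toReal_add (by simp) (measure_ne_top μ _), hμA'] at h2
      simpa using h2
    linarith
  -- final numeric bounds
  have hs2 : Real.sqrt 2 ^ 2 = 2 := Real.sq_sqrt (by norm_num)
  have hs2pos : 0 < Real.sqrt 2 := Real.sqrt_pos.mpr (by norm_num)
  have hsp : Real.sqrt (2 * π) ^ 2 = 2 * π := Real.sq_sqrt (by positivity)
  have hsppos : 0 < Real.sqrt (2 * π) := Real.sqrt_pos.mpr (by positivity)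
  have hpi1 : (3.14 : ℝ) < π := Real.pi_gt_d2
  constructor
  · rw [hgoal_eq]
    refine le_trans ?_ hxreal
    have hsplow : (2.5 : ℝ) ≤ Real.sqrt (2 * π) := by
      nlinarith [hsp, hsppos, hpi1]
    clear hmed hindep hgauss hae hAA' hM_eq hgoal_eq
    have ht1 : (1.414 : ℝ) ≤ Real.sqrt 2 := by
      nlinarith [hs2, hs2pos]
    have ht2 : Real.sqrt 2 ≤ (1.415 : ℝ) := by
      nlinarith [hs2, hs2pos]
    have hc0 : (0:ℝ) ≤ (Real.sqrt (2 * π))⁻¹ := by positivity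
    have hc1 : (Real.sqrt (2 * π))⁻¹ ≤ 2/5 := by
      have hprod : Real.sqrt (2 * π) * (Real.sqrt (2 * π))⁻¹ = 1 :=
        mul_inv_cancel₀ (ne_of_gt hsppos)
      nlinarith [mul_le_mul_of_nonneg_right hsplow hc0]
    have hnum : 1 / (10 * Real.sqrt 2) ≤ (3/10) * (1/2 - (3/5) * (Real.sqrt (2 * π))⁻¹) := by
      rw [div_le_iff₀ (by positivity)]
      nlinarith [mul_le_mul ht2 hc1 hc0 (by norm_num : (0:ℝ) ≤ 1.415)]
    refine hnum.trans ?_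
    nlinarith [hxlow]
  · rw [hgoal_eq]
    exact hupper
end
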